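/- arXiv:2110.07060 — 5 statements merged into one kernel-verified Lean document; each statement's English description precedes it below -/
import Mathlib

section
/- Let R be a commutative ring, n ≥ 1 an integer, and σ a permutation of {1,…,n}. Then in the polynomial ring R[X] one has det(I_n − X·P_σ) = ∏_{j=1}^{n} (1 − X^j)^{m_j(σ)}, where the permutation matrix P_σ is regarded as a matrix with entries in R[X]. -/
open Polynomial Matrix

section Aux

variable {R : Type*} [CommRing R] {n : ℕ}

/-- The permutation matrix with (i,j) entry `[σ j = i]`, over `R[X]`. -/
noncomputable def PM (R : Type*) [CommRing R] {n : ℕ} (σ : Equiv.Perm (Fin n)) :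
    Matrix (Fin n) (Fin n) R[X] :=
  Matrix.of fun i j => if σ j = i then 1 else 0

lemma PM_mul (σ τ : Equiv.Perm (Fin n)) : PM R σ * PM R τ = PM R (σ * τ) := by
  ext i j
  simp [PM, Matrix.mul_apply, eq_comm]

lemma PM_add (σ τ : Equiv.Perm (Fin n)) (hd : Equiv.Perm.Disjoint σ τ) :
    PM R σ + PM R τ = 1 + PM R (σ * τ) := by
  refine Matrix.ext fun i j => ?_
  have hone : (1 : Matrix (Fin n) (Fin n) R[X]) i j = if j = i then 1 else 0 := by
    rw [Matrix.one_apply]; exact if_congr eq_comm rfl rfl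
  simp only [PM, Matrix.of_apply, Matrix.add_apply, hone, Equiv.Perm.mul_apply]
  rcases hd j with h | h
  · by_cases hj : τ j = j
    · simp only [h, hj]
    · have h2 : σ (τ j) = τ j := by
        rcases hd (τ j) with h' | h'
        · exact h'
        · exact absurd (τ.injective h') hj
      simp only [h, h2]
  · simp only [h]
    exact add_comm _ _

lemma PM_one_sub_mul (σ τ : Equiv.Perm (Fin n)) (hd : Equiv.Perm.Disjoint σ τ) :
    (1 - (X : R[X]) • PM R σ) * (1 - (X : R[X]) • PM R τ)
      = (1 - (X : R[X])) • (1 - (X : R[X]) • PM R (σ * τ)) := by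
  have h2 : (X : R[X]) • PM R σ + (X : R[X]) • PM R τ
      = (X : R[X]) • (1 : Matrix (Fin n) (Fin n) R[X]) + (X : R[X]) • PM R (σ * τ) := by
    rw [← smul_add, ← smul_add, PM_add σ τ hd]
  have h3 : (X : R[X]) • PM R σ
      = (X : R[X]) • (1 : Matrix (Fin n) (Fin n) R[X]) + (X : R[X]) • PM R (σ * τ)
        - (X : R[X]) • PM R τ := by
    rw [← h2]; abel
  simp only [sub_mul, mul_sub, one_mul, mul_one, smul_mul_assoc, mul_smul_comm,
    smul_smul, PM_mul, sub_smul, one_smul, smul_sub]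
  rw [h3]
  abel

/-- Classification: if `c` is a cycle and `τ i ∈ {i, c i}` for all `i`, then `τ = 1` or `τ = c`. -/
lemma classify (c τ : Equiv.Perm (Fin n)) (hc : c.IsCycle)
    (h : ∀ i, τ i = i ∨ τ i = c i) : τ = 1 ∨ τ = c := by
  by_cases h1 : τ = 1
  · exact Or.inl h1
  right
  obtain ⟨i₀, hi₀⟩ : ∃ i, τ i ≠ i := by
    by_contra hall
    push_neg at hall
    exact h1 (Equiv.ext fun i => hall i)
  have hi₀c : τ i₀ = c i₀ := (h i₀).resolve_left hi₀
  have hci₀ : c i₀ ≠ i₀ := hi₀c ▸ hi₀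
  -- orbit of i₀ is in the "agree with c" set
  have horb : ∀ m : ℕ, τ ((c ^ m) i₀) = c ((c ^ m) i₀) ∧ c ((c ^ m) i₀) ≠ (c ^ m) i₀ := by
    intro m
    induction m with
    | zero => simpa using ⟨hi₀c, hci₀⟩
    | succ m ih =>
      obtain ⟨ih1, ih2⟩ := ih
      set y := (c ^ m) i₀ with hy
      have hy' : (c ^ (m + 1)) i₀ = c y := by
        rw [pow_succ', Equiv.Perm.mul_apply]
      rw [hy']
      constructor
      · rcases h (c y) with h' | h'
        · exfalso
          have : τ (c y) = τ y := by rw [h', ih1]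
          exact ih2 (τ.injective this)
        · exact h'
      · intro hbad
        exact ih2 (c.injective hbad)
  refine Equiv.ext fun j => ?_
  rcases h j with hj | hj
  · -- τ j = j; show c j = j
    by_contra hne
    rw [hj] at hne
    have hcj : c j ≠ j := fun hh => hne (by rw [hh])
    obtain ⟨m, hm⟩ := hc.exists_pow_eq hci₀ hcj
    have := (horb m).1
    rw [hm, hj] at this
    exact ((horb m).2 (by rw [hm, ← this])).elim
  · exact hj

lemma filter_fixed_card (c : Equiv.Perm (Fin n)) :
    (Finset.univ.filter fun i : Fin n => c i = i).card = n - c.support.card := by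
  have h1 : (Finset.univ.filter fun i : Fin n => c i = i).card
      + (Finset.univ.filter fun i : Fin n => ¬ c i = i).card = n := by
    rw [Finset.card_filter_add_card_filter_not]
    simp
  have h2 : c.support.card = (Finset.univ.filter fun i : Fin n => ¬ c i = i).card := by
    have hset : c.support = Finset.univ.filter fun i : Fin n => ¬ c i = i := by
      ext i
      simp [Equiv.Perm.mem_support]
    rw [hset]
  omega

lemma det_cycle (c : Equiv.Perm (Fin n)) (hc : c.IsCycle) :
    (1 - (X : R[X]) • PM R c).det
      = (1 - (X : R[X])) ^ (n - c.support.card)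
        * (1 - (X : R[X]) ^ c.support.card) := by
  classical
  rw [Matrix.det_apply']
  have hentry : ∀ (a i : Fin n), (1 - (X : R[X]) • PM R c) a i
      = (if a = i then 1 else 0) - X * (if c i = a then 1 else 0) := by
    intro a i
    simp [PM, Matrix.one_apply, Matrix.sub_apply]
  have hzero : ∀ τ ∈ (Finset.univ : Finset (Equiv.Perm (Fin n))),
      τ ∉ ({1, c} : Finset (Equiv.Perm (Fin n))) →
      (Equiv.Perm.sign τ : R[X]) * ∏ i, (1 - (X : R[X]) • PM R c) (τ i) i = 0 := by
    intro τ _ hτ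
    simp only [Finset.mem_insert, Finset.mem_singleton] at hτ
    push_neg at hτ
    have : ¬ (∀ i, τ i = i ∨ τ i = c i) := by
      intro hall
      rcases classify c τ hc hall with h | h
      · exact hτ.1 h
      · exact hτ.2 h
    push_neg at this
    obtain ⟨i, hi1, hi2⟩ := this
    have : (1 - (X : R[X]) • PM R c) (τ i) i = 0 := by
      rw [hentry]
      rw [if_neg hi1, if_neg (fun hh => hi2 hh.symm)]
      ring
    have hz : ∏ k, (1 - (X : R[X]) • PM R c) (τ k) k = 0 :=
      Finset.prod_eq_zero (Finset.mem_univ i) this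
    rw [hz, mul_zero]
  rw [← Finset.sum_subset (Finset.subset_univ ({1, c} : Finset (Equiv.Perm (Fin n)))) hzero]
  have hne : (1 : Equiv.Perm (Fin n)) ≠ c := fun hh => hc.ne_one hh.symm
  rw [Finset.sum_pair hne]
  have hterm1 : (Equiv.Perm.sign (1 : Equiv.Perm (Fin n)) : R[X])
      * ∏ i, (1 - (X : R[X]) • PM R c) ((1 : Equiv.Perm (Fin n)) i) i
      = (1 - (X : R[X])) ^ (n - c.support.card) := by
    have : ∀ i : Fin n, (1 - (X : R[X]) • PM R c) ((1 : Equiv.Perm (Fin n)) i) i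
        = if c i = i then 1 - X else 1 := by
      intro i
      rw [Equiv.Perm.one_apply, hentry, if_pos rfl]
      by_cases hh : c i = i <;> simp [hh]
    rw [Finset.prod_congr rfl (fun i _ => this i), Finset.prod_ite, Finset.prod_const,
      Finset.prod_const, one_pow, mul_one, filter_fixed_card]
    simp
  have htermc : (Equiv.Perm.sign c : R[X]) * ∏ i, (1 - (X : R[X]) • PM R c) (c i) i
      = -((X : R[X]) ^ c.support.card * (1 - (X : R[X])) ^ (n - c.support.card)) := by
    have hprod : ∀ i : Fin n, (1 - (X : R[X]) • PM R c) (c i) i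
        = if c i = i then 1 - X else -X := by
      intro i
      rw [hentry, if_pos rfl]
      by_cases hh : c i = i <;> simp [hh]
    rw [Finset.prod_congr rfl (fun i _ => hprod i), Finset.prod_ite, Finset.prod_const,
      Finset.prod_const, filter_fixed_card]
    have hcardneg : (Finset.univ.filter fun i : Fin n => ¬ c i = i).card
        = c.support.card := by
      have hset : c.support = Finset.univ.filter fun i : Fin n => ¬ c i = i := by
        ext i
        simp [Equiv.Perm.mem_support]
      rw [hset]
    rw [hcardneg, hc.sign]
    push_cast
    rw [neg_pow (X : R[X])]
    ring_nf
    rw [mul_comm c.support.card 2, pow_mul]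
    norm_num
  rw [hterm1, htermc]
  ring

lemma det_key (σ : Equiv.Perm (Fin n)) :
    (1 - (X : R[X]) • PM R σ).det
      = (1 - (X : R[X])) ^ (n - σ.support.card)
        * (σ.cycleType.map fun k => 1 - (X : R[X]) ^ k).prod := by
  classical
  induction σ using Equiv.Perm.cycle_induction_on with
  | base_one =>
    have hPM : PM R (1 : Equiv.Perm (Fin n)) = 1 := by
      refine Matrix.ext fun i j => ?_; simp [PM, Matrix.one_apply, eq_comm]
    rw [hPM]
    have : (1 : Matrix (Fin n) (Fin n) R[X]) - (X : R[X]) • 1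
        = (1 - (X : R[X])) • 1 := by
      rw [sub_smul, one_smul]
    rw [this, Matrix.det_smul, Matrix.det_one, mul_one]
    simp
  | base_cycles c hc =>
    rw [det_cycle (R := R) c hc, hc.cycleType]
    simp
  | induction_disjoint σ τ hd hc ihσ ihτ =>
    have hdet := congrArg Matrix.det (PM_one_sub_mul (R := R) σ τ hd)
    rw [Matrix.det_mul, Matrix.det_smul, Fintype.card_fin, ihσ, ihτ] at hdet
    have hsupp : (σ * τ).support = σ.support ∪ τ.support := hd.support_mul
    have hdisj : _root_.Disjoint σ.support τ.support := Equiv.Perm.Disjoint.disjoint_support hd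
    have hcard : (σ * τ).support.card = σ.support.card + τ.support.card := by
      rw [hsupp, Finset.card_union_of_disjoint hdisj]
    have hle : σ.support.card + τ.support.card ≤ n := by
      rw [← hcard]
      simpa using Finset.card_le_univ (σ * τ).support
    have hct : (σ * τ).cycleType = σ.cycleType + τ.cycleType := Equiv.Perm.Disjoint.cycleType_mul hd
    -- target value
    set T := (1 - (X : R[X])) ^ (n - (σ * τ).support.card)
        * ((σ * τ).cycleType.map fun k => 1 - (X : R[X]) ^ k).prod with hT
    have hmonic : ((X : R[X]) - C 1).Monic := Polynomial.monic_X_sub_C 1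
    have hreg : IsLeftRegular (((X : R[X]) - C 1) ^ n) := (hmonic.pow n).isRegular.left
    apply hreg
    have e1 : ((X : R[X]) - C 1) ^ n = (-1 : R[X]) ^ n * (1 - X) ^ n := by
      rw [← mul_pow]
      congr 1
      rw [Polynomial.C_1]
      ring
    have key : (1 - (X : R[X])) ^ n * (1 - (X : R[X]) • PM R (σ * τ)).det
        = (1 - (X : R[X])) ^ n * T := by
      have hexp : (n - σ.support.card) + (n - τ.support.card)
          = n + (n - (σ.support.card + τ.support.card)) := by omega
      have h4 : (1 - (X : R[X])) ^ (n - σ.support.card) * (1 - X) ^ (n - τ.support.card)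
          = (1 - X) ^ n * (1 - X) ^ (n - (σ.support.card + τ.support.card)) := by
        rw [← pow_add, ← pow_add, hexp]
      rw [← hdet, hT, hct, hcard, Multiset.map_add, Multiset.prod_add, mul_mul_mul_comm, h4]
      ring
    calc ((X : R[X]) - C 1) ^ n * (1 - (X : R[X]) • PM R (σ * τ)).det
        = (-1 : R[X]) ^ n * ((1 - X) ^ n * (1 - (X : R[X]) • PM R (σ * τ)).det) := by
          rw [e1]; ring
      _ = (-1 : R[X]) ^ n * ((1 - X) ^ n * T) := by rw [key]
      _ = ((X : R[X]) - C 1) ^ n * T := by rw [e1]; ring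

end Aux

/-- For a commutative ring `R`, `n ≥ 1` and a permutation `σ` of `{1,…,n}`,
the determinant of `I - X • P_σ` over `R[X]` equals `∏_{j=1}^n (1 - X^j)^{m_j(σ)}`, where
`m_j(σ)` is the number of cycles of `σ` of length `j` (fixed points counted as cycles of
length `1`). -/
theorem det_one_sub_X_smul_permMatrix
    (R : Type*) [CommRing R] (n : ℕ) (hn : 1 ≤ n) (σ : Equiv.Perm (Fin n))
    (P : Matrix (Fin n) (Fin n) R[X])
    (hP : ∀ i j, P i j = if σ j = i then 1 else 0)
    (m : ℕ → ℕ)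
    (hm1 : m 1 = (Finset.univ.filter fun i : Fin n => σ i = i).card)
    (hm : ∀ j, 2 ≤ j → m j = Multiset.count j σ.cycleType) :
    Matrix.det (1 - (Polynomial.X : R[X]) • P) =
      ∏ j ∈ Finset.Icc 1 n, (1 - (Polynomial.X : R[X]) ^ j) ^ m j := by
  classical
  have hPeq : P = PM R σ := by
    refine Matrix.ext fun i j => ?_; rw [hP]; rfl
  rw [hPeq, det_key σ]
  -- rewrite RHS
  have hIcc : Finset.Icc 1 n = insert 1 (Finset.Icc 2 n) := by
    ext x
    simp only [Finset.mem_Icc, Finset.mem_insert]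
    omega
  have h1notin : (1 : ℕ) ∉ Finset.Icc 2 n := by simp
  rw [hIcc, Finset.prod_insert h1notin, pow_one]
  -- fixed point count
  have hfix : n - σ.support.card = m 1 := by
    rw [hm1, filter_fixed_card]
  -- cycle part
  have hsub : σ.cycleType.toFinset ⊆ Finset.Icc 2 n := by
    intro j hj
    rw [Multiset.mem_toFinset] at hj
    have h2 : 2 ≤ j := Equiv.Perm.two_le_of_mem_cycleType hj
    have h3 : j ≤ n := by
      calc j ≤ σ.cycleType.sum := Multiset.le_sum_of_mem hj
        _ = σ.support.card := σ.sum_cycleType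
        _ ≤ n := by simpa using Finset.card_le_univ σ.support
    simp [Finset.mem_Icc, h2, h3]
  have hcyc : (σ.cycleType.map fun k => 1 - (X : R[X]) ^ k).prod
      = ∏ j ∈ Finset.Icc 2 n, (1 - (X : R[X]) ^ j) ^ m j := by
    rw [Finset.prod_multiset_map_count,
      Finset.prod_subset hsub (fun j _ hnot => by
        rw [Multiset.count_eq_zero_of_notMem (by simpa using hnot), pow_zero])]
    apply Finset.prod_congr rfl
    intro j hj
    rw [Finset.mem_Icc] at hj
    rw [hm j hj.1]
  rw [hcyc, hfix]
end

section
/- Fix integers r ≥ 1 and n ≥ 1. Let F be the field of fractions of the polynomial ring ℚ[x,w] in two independent indeterminates x, w. For each integer j ≥ 0 define μ_j := (∏_{i=1}^{j}(1 − w^i)) · (1/j!) · Σ_{σ ∈ S_j} det(I_j + x·P_σ)^r / det(I_j − w·P_σ) ∈ F, with μ_0 = 1. Then μ_n = (1/n)·Σ_{k=1}^{n} f((−x)^k, w^k) · c_k(w) · μ_{n−k}, where f(x,w) := (1−x)^r/(1−w) and c_k(w) := ∏_{i=0}^{k−1}(1 − w^{n−i}). -/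
/-- The `j × j` permutation matrix of `σ`, with `(i,l)` entry `1` if `σ l = i`, else `0`. -/
noncomputable def permMatrix (F : Type*) [Zero F] [One F] {j : ℕ} (σ : Equiv.Perm (Fin j)) :
    Matrix (Fin j) (Fin j) F :=
  Matrix.of fun i l => if σ l = i then 1 else 0

/-- The field of fractions of `ℚ[x,w]` (two independent indeterminates). -/
noncomputable abbrev FF2 : Type _ := FractionRing (MvPolynomial (Fin 2) ℚ)

/-- The image of the first indeterminate `x` in the fraction field. -/
noncomputable def xx : FF2 := algebraMap (MvPolynomial (Fin 2) ℚ) FF2 (MvPolynomial.X 0)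

/-- The image of the second indeterminate `w` in the fraction field. -/
noncomputable def ww : FF2 := algebraMap (MvPolynomial (Fin 2) ℚ) FF2 (MvPolynomial.X 1)

/-- `μ_j = (∏_{i=1}^j (1 − w^i)) (1/j!) Σ_{σ ∈ S_j} det(I + x P_σ)^r / det(I − w P_σ)`
(so `μ_0 = 1`). -/
noncomputable def muRep (r : ℕ) (j : ℕ) : FF2 :=
  (∏ i ∈ Finset.Icc 1 j, (1 - ww ^ i)) * (j.factorial : FF2)⁻¹ *
    ∑ σ : Equiv.Perm (Fin j),
      (Matrix.det (1 + xx • permMatrix FF2 σ)) ^ r / Matrix.det (1 - ww • permMatrix FF2 σ)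

set_option linter.unusedSectionVars false
set_option maxHeartbeats 1000000

open Equiv Matrix Finset Function
section C1

noncomputable def pmat (R : Type*) [Zero R] [One R] {α : Type*} [DecidableEq α]
    (σ : Equiv.Perm α) : Matrix α α R :=
  Matrix.of fun i l => if σ l = i then 1 else 0

noncomputable def detW (R : Type*) [CommRing R] {α : Type*} [DecidableEq α] [Fintype α]
    (t : R) (σ : Equiv.Perm α) : R :=
  Matrix.det (1 + t • pmat R σ)

variable {R : Type*} [CommRing R] {α β : Type*} [DecidableEq α] [DecidableEq β]

lemma pmat_permCongr (e : α ≃ β) (σ : Equiv.Perm α) :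
    pmat R (e.permCongr σ) = (pmat R σ).submatrix ⇑e.symm ⇑e.symm := by
  ext i l
  simp only [pmat, of_apply, submatrix_apply, permCongr_apply]
  simp [Equiv.apply_eq_iff_eq_symm_apply]

lemma detW_permCongr [Fintype α] [Fintype β] (t : R) (e : α ≃ β) (σ : Equiv.Perm α) :
    detW R t (e.permCongr σ) = detW R t σ := by
  unfold detW
  rw [pmat_permCongr, ← Matrix.submatrix_one_equiv e.symm]
  rw [show Matrix.submatrix (1 : Matrix α α R) ⇑e.symm ⇑e.symm
      + t • (pmat R σ).submatrix ⇑e.symm ⇑e.symm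
      = (1 + t • pmat R σ).submatrix ⇑e.symm ⇑e.symm from rfl]
  rw [Matrix.det_submatrix_equiv_self]

lemma pmat_sumCongr (σ : Equiv.Perm α) (τ : Equiv.Perm β) :
    pmat R (Equiv.sumCongr σ τ) = Matrix.fromBlocks (pmat R σ) 0 0 (pmat R τ) := by
  ext i l
  cases i <;> cases l <;> simp [pmat]

lemma detW_sumCongr [Fintype α] [Fintype β] (t : R) (σ : Equiv.Perm α) (τ : Equiv.Perm β) :
    detW R t (Equiv.sumCongr σ τ) = detW R t σ * detW R t τ := by
  unfold detW
  rw [pmat_sumCongr]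
  have h : (1 : Matrix (α ⊕ β) (α ⊕ β) R) + t • Matrix.fromBlocks (pmat R σ) 0 0 (pmat R τ)
      = Matrix.fromBlocks (1 + t • pmat R σ) 0 0 (1 + t • pmat R τ) := by
    rw [← Matrix.fromBlocks_one, Matrix.fromBlocks_smul, Matrix.fromBlocks_add]
    simp
  rw [h, Matrix.det_fromBlocks_zero₂₁]
end C1
section C2

variable {R : Type*} [CommRing R] {α : Type*} [DecidableEq α]

/-- If every value of `π` agrees with `id` or with a fixed-point-free cycle `c`,
then `π = 1` or `π = c`. -/
lemma perm_eq_one_or_cycle [Finite α] {c π : Equiv.Perm α} (hc : c.IsCycle)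
    (hfix : ∀ i, c i ≠ i) (h : ∀ i, π i = i ∨ π i = c i) : π = 1 ∨ π = c := by
  by_cases hπ : π = 1
  · exact Or.inl hπ
  right
  obtain ⟨a, ha⟩ : ∃ a, π a ≠ a := by
    by_contra hcon
    push_neg at hcon
    exact hπ (Equiv.ext fun x => hcon x)
  have ha' : π a = c a := (h a).resolve_left ha
  have step : ∀ i, π i = c i → π (c i) = c (c i) := by
    intro i hi
    rcases h (c i) with h1 | h1
    · exfalso
      apply hfix i
      exact π.injective (by rw [hi, h1])
    · exact h1
  have iter : ∀ m : ℕ, π ((c ^ m) a) = c ((c ^ m) a) := by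
    intro m
    induction m with
    | zero => simpa using ha'
    | succ m ih =>
      have hcm : (c ^ (m + 1)) a = c ((c ^ m) a) := by
        rw [pow_succ']
        simp [Equiv.Perm.mul_apply]
      rw [hcm]
      exact step _ ih
  apply Equiv.ext
  intro j
  obtain ⟨m, hm⟩ := hc.exists_pow_eq (hfix a) (hfix j)
  rw [← hm]
  exact iter m

lemma one_ne_finRotate (k : ℕ) : (1 : Equiv.Perm (Fin (k + 2))) ≠ finRotate (k + 2) := by
  intro h
  have h2 : finRotate (k + 2) 0 = 0 := by rw [← h]; rfl
  simp [finRotate_succ_apply] at h2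

lemma detW_finRotate (t : R) (k : ℕ) :
    detW R t (finRotate (k + 1)) = 1 - (-t) ^ (k + 1) := by
  cases k with
  | zero =>
    have : detW R t (finRotate 1) = (1 + t • pmat R (finRotate 1)) 0 0 := by
      rw [detW, Matrix.det_fin_one]
    rw [this]
    simp [pmat, Matrix.add_apply, Matrix.smul_apply, Matrix.one_apply, Subsingleton.elim
      ((finRotate 1) 0) 0]
  | succ k =>
    have hfix : ∀ i : Fin (k + 2), finRotate (k + 2) i ≠ i := by
      intro i
      rw [← Equiv.Perm.mem_support, support_finRotate]
      exact Finset.mem_univ i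
    set M := (1 : Matrix (Fin (k+2)) (Fin (k+2)) R) + t • pmat R (finRotate (k + 2)) with hM
    have hvanish : ∀ π ∈ (Finset.univ : Finset (Equiv.Perm (Fin (k + 2)))),
        π ∉ ({1, finRotate (k + 2)} : Finset (Equiv.Perm (Fin (k + 2)))) →
        Equiv.Perm.sign π • ∏ i, M (π i) i = 0 := by
      intro π _ hπ
      have hex : ∃ i, ¬(π i = i ∨ π i = finRotate (k + 2) i) := by
        by_contra hcon
        push_neg at hcon
        rcases perm_eq_one_or_cycle isCycle_finRotate hfix hcon with h | h <;>
          simp [h] at hπ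
      obtain ⟨i, hi⟩ := hex
      push_neg at hi
      have hzero : M (π i) i = 0 := by
        simp only [hM, Matrix.add_apply, Matrix.smul_apply, Matrix.one_apply, pmat,
          Matrix.of_apply]
        rw [if_neg hi.1, if_neg (fun h => hi.2 h.symm)]
        simp
      rw [Finset.prod_eq_zero (f := fun j => M (π j) j) (Finset.mem_univ i) hzero, smul_zero]
    have hdet : M.det = ∑ π ∈ ({1, finRotate (k + 2)} : Finset (Equiv.Perm (Fin (k + 2)))),
        Equiv.Perm.sign π • ∏ i, M (π i) i := by
      rw [Matrix.det_apply]
      exact (Finset.sum_subset (Finset.subset_univ _) hvanish).symm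
    rw [detW, ← hM, hdet, Finset.sum_pair (one_ne_finRotate k)]
    have e1 : ∀ i, M ((1 : Equiv.Perm (Fin (k+2))) i) i = 1 := by
      intro i
      simp [hM, Matrix.add_apply, Matrix.smul_apply, Matrix.one_apply, pmat, hfix i]
    have e2 : ∀ i, M ((finRotate (k+2)) i) i = t := by
      intro i
      simp [hM, Matrix.add_apply, Matrix.smul_apply, Matrix.one_apply, pmat, hfix i]
    simp only [e1, e2, Finset.prod_const_one, Finset.prod_const, Finset.card_univ,
      Fintype.card_fin, Equiv.Perm.sign_one, one_smul, sign_finRotate, Units.smul_def,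
      zsmul_eq_mul]
    push_cast
    ring
end C2
section C5

section Bij
variable {m k : ℕ}

def Femb (f : Fin k ↪ Fin m) : Fin (k + 1) ↪ Fin (m + 1) :=
  ⟨Fin.cons 0 (fun i => (f i).succ), by
    intro a b
    induction a using Fin.cases <;> induction b using Fin.cases <;>
      simp_all [Fin.succ_ne_zero, (Fin.succ_ne_zero _).symm, Fin.succ_inj, f.injective.eq_iff,
        Fin.cons_zero, Fin.cons_succ, eq_comm]⟩

lemma Femb_zero (f : Fin k ↪ Fin m) : Femb f 0 = 0 := rfl

lemma Femb_succ (f : Fin k ↪ Fin m) (i : Fin k) : Femb f i.succ = (f i).succ := by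
  simp [Femb]; exact Fin.cons_succ (α := fun _ => Fin (m + 1)) (0 : Fin (m + 1)) (fun i => (f i).succ) i

def cset (f : Fin k ↪ Fin m) : Finset (Fin (m + 1)) := (Finset.univ.map (Femb f))ᶜ

lemma card_cset (hk : k ≤ m) (f : Fin k ↪ Fin m) : (cset f).card = m - k := by
  rw [cset, Finset.card_compl, Finset.card_map, Finset.card_univ]
  simp only [Fintype.card_fin]
  omega

noncomputable def oIso (hk : k ≤ m) (f : Fin k ↪ Fin m) : Fin (m - k) ≃o {x // x ∈ cset f} :=
  (cset f).orderIsoOfFin (card_cset hk f)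

noncomputable def Eqv (hk : k ≤ m) (f : Fin k ↪ Fin m) :
    (Fin (k + 1) ⊕ Fin (m - k)) ≃ Fin (m + 1) :=
  Equiv.ofBijective
    (Sum.elim ⇑(Femb f) (fun j => ((oIso hk f j : {x // x ∈ cset f}) : Fin (m + 1))))
    (by
      rw [Fintype.bijective_iff_injective_and_card]
      constructor
      · rintro (a | a) (b | b) h
        · simp only [Sum.elim_inl] at h
          exact congrArg Sum.inl ((Femb f).injective h)
        · exfalso
          have hmem := (oIso hk f b).2
          simp only [cset, Finset.mem_compl] at hmem
          simp only [Sum.elim_inl, Sum.elim_inr] at h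
          exact hmem (h ▸ Finset.mem_map.mpr ⟨a, Finset.mem_univ a, rfl⟩)
        · exfalso
          have hmem := (oIso hk f a).2
          simp only [cset, Finset.mem_compl] at hmem
          simp only [Sum.elim_inl, Sum.elim_inr] at h
          exact hmem (h ▸ Finset.mem_map.mpr ⟨b, Finset.mem_univ b, rfl⟩)
        · simp only [Sum.elim_inr] at h
          exact congrArg Sum.inr ((oIso hk f).injective (Subtype.coe_injective h))
      · simp only [Fintype.card_sum, Fintype.card_fin]
        omega)

lemma Eqv_inl (hk : k ≤ m) (f : Fin k ↪ Fin m) (i : Fin (k + 1)) :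
    Eqv hk f (Sum.inl i) = Femb f i := rfl

lemma Eqv_inr (hk : k ≤ m) (f : Fin k ↪ Fin m) (j : Fin (m - k)) :
    Eqv hk f (Sum.inr j) = ((oIso hk f j : {x // x ∈ cset f}) : Fin (m + 1)) := rfl

noncomputable def Phi (hk : k ≤ m) (p : (Fin k ↪ Fin m) × Equiv.Perm (Fin (m - k))) :
    Equiv.Perm (Fin (m + 1)) :=
  (Eqv hk p.1).permCongr (Equiv.sumCongr (finRotate (k + 1)) p.2)

lemma iterate_permCongr {α β : Type*} (e : α ≃ β) (σ : Equiv.Perm α) (n : ℕ) (x : α) :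
    (⇑(e.permCongr σ))^[n] (e x) = e ((⇑σ)^[n] x) := by
  induction n with
  | zero => simp
  | succ n ih =>
    rw [Function.iterate_succ_apply', ih, Function.iterate_succ_apply']
    simp

lemma iterate_sumCongr_inl {α β : Type*} (σ : Equiv.Perm α) (τ : Equiv.Perm β) (n : ℕ) (x : α) :
    (⇑(Equiv.sumCongr σ τ))^[n] (Sum.inl x) = Sum.inl ((⇑σ)^[n] x) := by
  induction n with
  | zero => simp
  | succ n ih => rw [Function.iterate_succ_apply', ih, Function.iterate_succ_apply']; simp

lemma iterate_finRotate (k : ℕ) (i : ℕ) (h : i ≤ k) :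
    (⇑(finRotate (k + 1)))^[i] 0 = (⟨i, by omega⟩ : Fin (k + 1)) := by
  induction i with
  | zero => rfl
  | succ i ih =>
    rw [Function.iterate_succ_apply', ih (by omega), finRotate_succ_apply]
    apply Fin.ext
    rw [Fin.val_add_one_of_lt]
    exact Fin.lt_last_iff_ne_last.mpr (by simp [Fin.ext_iff]; omega)

lemma Phi_iterate (hk : k ≤ m) (p : (Fin k ↪ Fin m) × Equiv.Perm (Fin (m - k)))
    (i : ℕ) (hi : i ≤ k) :
    (⇑(Phi hk p))^[i] 0 = Femb p.1 ⟨i, by omega⟩ := by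
  rw [show (0 : Fin (m + 1)) = Eqv hk p.1 (Sum.inl 0) from (Femb_zero p.1).symm]
  rw [Phi, iterate_permCongr, iterate_sumCongr_inl, iterate_finRotate k i hi]
  rfl

lemma Phi_recover (hk : k ≤ m) (p : (Fin k ↪ Fin m) × Equiv.Perm (Fin (m - k))) (i : Fin k) :
    (⇑(Phi hk p))^[(i : ℕ) + 1] 0 = (p.1 i).succ := by
  rw [Phi_iterate hk p ((i : ℕ) + 1) (by omega)]
  rw [show (⟨(i : ℕ) + 1, by omega⟩ : Fin (k + 1)) = Fin.succ i from rfl, Femb_succ]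

lemma Phi_injective (hk : k ≤ m) : Function.Injective (Phi hk) := by
  rintro ⟨f1, τ1⟩ ⟨f2, τ2⟩ h
  have hf : f1 = f2 := by
    ext i
    have h1 := Phi_recover hk (f1, τ1) i
    have h2 := Phi_recover hk (f2, τ2) i
    rw [h] at h1
    have h3 : (f1 i).succ = (f2 i).succ := h1.symm.trans h2
    exact congrArg Fin.val (Fin.succ_injective _ h3)
  subst hf
  have hsc := (Eqv hk f1).permCongr.injective h
  have hτ : τ1 = τ2 := by
    apply Equiv.ext; intro x
    simpa using Equiv.ext_iff.mp hsc (Sum.inr x)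
  rw [hτ]

lemma Phi_surjective {m k : ℕ} (hk : k ≤ m) (σ : Equiv.Perm (Fin (m + 1)))
    (hσ : Function.minimalPeriod (⇑σ) 0 = k + 1) : ∃ p, Phi hk p = σ := by
  have hper : (⇑σ)^[k + 1] 0 = 0 := by
    have := Function.isPeriodicPt_minimalPeriod (⇑σ) 0
    rwa [hσ] at this
  have hne : ∀ i : ℕ, 0 < i → i < k + 1 → (⇑σ)^[i] 0 ≠ 0 := by
    intro i h1 h2 hz
    have hp : Function.IsPeriodicPt (⇑σ) i 0 := hz
    rw [Function.isPeriodicPt_iff_minimalPeriod_dvd, hσ] at hp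
    have := Nat.le_of_dvd h1 hp
    omega
  have hinj : ∀ i j : ℕ, i < k + 1 → j < k + 1 → (⇑σ)^[i] 0 = (⇑σ)^[j] 0 → i = j := by
    intro i j hi hj hij
    exact Function.iterate_injOn_Iio_minimalPeriod (f := ⇑σ) (x := 0)
      (by rw [hσ]; exact Set.mem_Iio.mpr hi) (by rw [hσ]; exact Set.mem_Iio.mpr hj) hij
  have hneF : ∀ i : Fin k, (⇑σ)^[(i : ℕ) + 1] 0 ≠ 0 := fun i =>
    hne _ (by omega) (by omega)
  set f : Fin k ↪ Fin m := ⟨fun i => ((⇑σ)^[(i : ℕ) + 1] 0).pred (hneF i), by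
    intro a b h
    have h2 : (⇑σ)^[(a : ℕ) + 1] 0 = (⇑σ)^[(b : ℕ) + 1] 0 := by
      have := congrArg Fin.succ h
      rwa [Fin.succ_pred, Fin.succ_pred] at this
    have := hinj _ _ (by omega) (by omega) h2
    exact Fin.ext (by omega)⟩ with hf
  have hFemb : ∀ i : Fin (k + 1), Femb f i = (⇑σ)^[(i : ℕ)] 0 := by
    intro i
    induction i using Fin.cases with
    | zero => rw [Femb_zero]; rfl
    | succ j =>
      rw [Femb_succ]
      show (((⇑σ)^[(j : ℕ) + 1] 0).pred (hneF j)).succ = _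
      rw [Fin.succ_pred]
      rfl
  have horbit : ∀ x : Fin (m + 1),
      σ x ∈ Finset.univ.map (Femb f) ↔ x ∈ Finset.univ.map (Femb f) := by
    intro x
    simp only [Finset.mem_map, Finset.mem_univ, true_and]
    constructor
    · rintro ⟨i, hi⟩
      rw [hFemb] at hi
      rcases Nat.eq_zero_or_pos (i : ℕ) with h0 | hpos
      · -- σ x = σ^[0] 0 = 0, so x = σ^[k] 0
        refine ⟨⟨k, by omega⟩, ?_⟩
        rw [hFemb]
        apply σ.injective
        show σ ((⇑σ)^[k] 0) = σ x
        rw [← Function.iterate_succ_apply' (⇑σ), hper, ← hi, h0]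
        simp
      · refine ⟨⟨(i : ℕ) - 1, by omega⟩, ?_⟩
        rw [hFemb]
        apply σ.injective
        rw [← Function.iterate_succ_apply' (⇑σ)]
        show (⇑σ)^[(i:ℕ) - 1 + 1] 0 = σ x
        rw [show (i:ℕ) - 1 + 1 = (i:ℕ) by omega, hi]
    · rintro ⟨i, hi⟩
      rw [hFemb] at hi
      by_cases hik : (i : ℕ) < k
      · refine ⟨⟨(i : ℕ) + 1, by omega⟩, ?_⟩
        rw [hFemb]
        show (⇑σ)^[(i:ℕ) + 1] 0 = σ x
        rw [Function.iterate_succ_apply' (⇑σ), hi]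
      · have hik' : (i : ℕ) = k := by omega
        refine ⟨⟨0, by omega⟩, ?_⟩
        rw [hFemb]
        show (⇑σ)^[0] 0 = σ x
        rw [← hi, ← Function.iterate_succ_apply' (⇑σ), hik']
        exact hper.symm
  have hS : ∀ x : Fin (m + 1), x ∈ cset f ↔ σ x ∈ cset f := by
    intro x
    simp only [cset, Finset.mem_compl]
    exact not_congr (horbit x).symm
  refine ⟨(f, ((oIso hk f).toEquiv.symm).permCongr (σ.subtypePerm (fun x => (hS x).symm))), ?_⟩
  apply Equiv.ext
  intro x
  obtain ⟨y, rfl⟩ := (Eqv hk f).surjective x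
  show (Eqv hk f).permCongr (Equiv.sumCongr (finRotate (k + 1)) _) ((Eqv hk f) y)
      = σ ((Eqv hk f) y)
  rw [Equiv.permCongr_apply, Equiv.symm_apply_apply]
  cases y with
  | inl i =>
    simp only [Equiv.sumCongr_apply, Sum.map_inl]
    rw [Eqv_inl, Eqv_inl, hFemb, hFemb]
    by_cases hik : (i : ℕ) < k
    · have hval : ((finRotate (k + 1) i : Fin (k+1)) : ℕ) = (i : ℕ) + 1 := by
        rw [finRotate_succ_apply, Fin.val_add_one_of_lt]
        exact Fin.lt_last_iff_ne_last.mpr (by simp [Fin.ext_iff]; omega)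
      rw [hval, Function.iterate_succ_apply' (⇑σ)]
    · have hik' : (i : ℕ) = k := by omega
      have hlast : finRotate (k + 1) i = 0 := by
        rw [finRotate_succ_apply]
        have : i = Fin.last k := Fin.ext (by simpa using hik')
        rw [this, Fin.last_add_one]
      rw [hlast]
      show (⇑σ)^[0] 0 = σ ((⇑σ)^[(i : ℕ)] 0)
      rw [← Function.iterate_succ_apply' (⇑σ), hik']
      exact hper.symm
  | inr j =>
    simp only [Equiv.sumCongr_apply, Sum.map_inr]
    rw [Eqv_inr, Eqv_inr]
    rw [Equiv.permCongr_apply]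
    simp only [Equiv.symm_symm, Equiv.apply_symm_apply]
    have hval : ((oIso hk f).toEquiv ((oIso hk f).toEquiv.symm
          ((σ.subtypePerm (fun x => (hS x).symm)) ((oIso hk f).toEquiv j))))
        = (σ.subtypePerm (fun x => (hS x).symm)) ((oIso hk f).toEquiv j) :=
      (oIso hk f).toEquiv.apply_symm_apply _
    exact (congrArg Subtype.val hval).trans rfl
end Bij
end C5
section C3

variable {α β : Type*}


lemma minimalPeriod_permCongr (e : α ≃ β) (σ : Equiv.Perm α) (x : α) :
    Function.minimalPeriod (⇑(e.permCongr σ)) (e x) = Function.minimalPeriod (⇑σ) x := by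
  have h : ∀ n, Function.IsPeriodicPt (⇑(e.permCongr σ)) n (e x) ↔
      Function.IsPeriodicPt (⇑σ) n x := by
    intro n
    unfold Function.IsPeriodicPt Function.IsFixedPt
    rw [iterate_permCongr]
    exact e.injective.eq_iff
  apply Nat.dvd_antisymm
  · exact (Function.isPeriodicPt_iff_minimalPeriod_dvd).mp
      ((h _).mpr (Function.isPeriodicPt_minimalPeriod _ _))
  · exact (Function.isPeriodicPt_iff_minimalPeriod_dvd).mp
      ((h _).mp (Function.isPeriodicPt_minimalPeriod _ _))


lemma minimalPeriod_sumCongr_inl (σ : Equiv.Perm α) (τ : Equiv.Perm β) (x : α) :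
    Function.minimalPeriod (⇑(Equiv.sumCongr σ τ)) (Sum.inl x) =
      Function.minimalPeriod (⇑σ) x := by
  have h : ∀ n, Function.IsPeriodicPt (⇑(Equiv.sumCongr σ τ)) n (Sum.inl x) ↔
      Function.IsPeriodicPt (⇑σ) n x := by
    intro n
    unfold Function.IsPeriodicPt Function.IsFixedPt
    rw [iterate_sumCongr_inl]
    simp
  apply Nat.dvd_antisymm
  · exact (Function.isPeriodicPt_iff_minimalPeriod_dvd).mp
      ((h _).mpr (Function.isPeriodicPt_minimalPeriod _ _))
  · exact (Function.isPeriodicPt_iff_minimalPeriod_dvd).mp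
      ((h _).mp (Function.isPeriodicPt_minimalPeriod _ _))


lemma minimalPeriod_finRotate (k : ℕ) :
    Function.minimalPeriod (⇑(finRotate (k + 1))) 0 = k + 1 := by
  have hper : Function.IsPeriodicPt (⇑(finRotate (k + 1))) (k + 1) 0 := by
    show (⇑(finRotate (k + 1)))^[k+1] 0 = 0
    rw [Function.iterate_succ_apply', iterate_finRotate k k le_rfl, finRotate_succ_apply]
    have : (⟨k, by omega⟩ : Fin (k + 1)) = Fin.last k := rfl
    rw [this, Fin.last_add_one]
  have hpos : 0 < Function.minimalPeriod (⇑(finRotate (k + 1))) 0 :=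
    hper.minimalPeriod_pos (by omega)
  have hdvd : Function.minimalPeriod (⇑(finRotate (k + 1))) 0 ∣ k + 1 :=
    Function.isPeriodicPt_iff_minimalPeriod_dvd.mp hper
  have hle := Nat.le_of_dvd (by omega) hdvd
  by_contra hne
  have hlt : Function.minimalPeriod (⇑(finRotate (k + 1))) 0 ≤ k := by omega
  have := Function.isPeriodicPt_minimalPeriod (⇑(finRotate (k + 1))) 0
  rw [Function.IsPeriodicPt, Function.IsFixedPt, iterate_finRotate k _ hlt] at this
  rw [Fin.ext_iff] at this
  simp at this
  omega
end C3
lemma Phi_minimalPeriod {m k : ℕ} (hk : k ≤ m)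
    (p : (Fin k ↪ Fin m) × Equiv.Perm (Fin (m - k))) :
    Function.minimalPeriod (⇑(Phi hk p)) 0 = k + 1 := by
  rw [show (0 : Fin (m + 1)) = Eqv hk p.1 (Sum.inl 0) from (Femb_zero p.1).symm]
  rw [Phi, minimalPeriod_permCongr, minimalPeriod_sumCongr_inl, minimalPeriod_finRotate]

/-- The weight `det(1+x P_σ)^r / det(1-w P_σ)` as an element of `FF2`. -/
noncomputable def DW (r : ℕ) {α : Type*} [DecidableEq α] [Fintype α] (σ : Equiv.Perm α) : FF2 :=
  (detW FF2 xx σ) ^ r / detW FF2 (-ww) σ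

lemma DW_Phi (r : ℕ) {m k : ℕ} (hk : k ≤ m)
    (p : (Fin k ↪ Fin m) × Equiv.Perm (Fin (m - k))) :
    DW r (Phi hk p) = ((1 - (-xx) ^ (k + 1)) ^ r / (1 - ww ^ (k + 1))) * DW r p.2 := by
  unfold DW Phi
  rw [detW_permCongr, detW_permCongr, detW_sumCongr, detW_sumCongr,
    detW_finRotate, detW_finRotate, neg_neg, mul_pow, div_mul_div_comm]

lemma muRep_eq (r j : ℕ) :
    muRep r j = (∏ i ∈ Finset.Icc 1 j, (1 - ww ^ i)) * (j.factorial : FF2)⁻¹ *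
      ∑ σ : Equiv.Perm (Fin j), DW r σ := by
  unfold muRep DW detW
  congr 1
  apply Finset.sum_congr rfl
  intro σ _
  have h1 : permMatrix FF2 σ = pmat FF2 σ := rfl
  rw [h1, sub_eq_add_neg, ← neg_smul]

lemma sum_DW_rec (r m : ℕ) :
    (∑ σ : Equiv.Perm (Fin (m + 1)), DW r σ)
      = ∑ k ∈ Finset.range (m + 1),
          ((m.descFactorial k : FF2) * ((1 - (-xx) ^ (k + 1)) ^ r / (1 - ww ^ (k + 1)))
            * ∑ τ : Equiv.Perm (Fin (m - k)), DW r τ) := by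
  have hmp : ∀ σ ∈ (Finset.univ : Finset (Equiv.Perm (Fin (m + 1)))),
      Function.minimalPeriod (⇑σ) 0 ∈ Finset.Icc 1 (m + 1) := by
    intro σ _
    rw [Finset.mem_Icc]
    have hper : Function.IsPeriodicPt (⇑σ) (orderOf σ) 0 := by
      show (⇑σ)^[orderOf σ] 0 = 0
      rw [← Equiv.Perm.coe_pow, pow_orderOf_eq_one]
      rfl
    have h1 : 0 < Function.minimalPeriod (⇑σ) 0 :=
      hper.minimalPeriod_pos (orderOf_pos σ)
    have h2 : Function.minimalPeriod (⇑σ) 0 ≤ m + 1 := by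
      have hcard := Finset.card_le_card_of_injOn (fun n => (⇑σ)^[n] 0)
        (fun a _ => Finset.mem_univ ((⇑σ)^[a] 0))
        (s := Finset.range (Function.minimalPeriod (⇑σ) 0)) (t := Finset.univ)
        (fun a ha b hb hab => Function.iterate_injOn_Iio_minimalPeriod
          (Set.mem_Iio.mpr (Finset.mem_range.mp (Finset.mem_coe.mp ha)))
          (Set.mem_Iio.mpr (Finset.mem_range.mp (Finset.mem_coe.mp hb))) hab)
      simpa using hcard
    omega
  rw [← Finset.sum_fiberwise_of_maps_to hmp (DW r)]
  rw [← Finset.Ico_add_one_right_eq_Icc, Finset.sum_Ico_eq_sum_range,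
    show m + 1 + 1 - 1 = m + 1 by omega]
  apply Finset.sum_congr rfl
  intro k hk'
  have hk : k ≤ m := by
    rw [Finset.mem_range] at hk'
    omega
  rw [show 1 + k = k + 1 by omega]
  have hfiber : ∑ σ ∈ Finset.univ.filter
        (fun σ : Equiv.Perm (Fin (m + 1)) => Function.minimalPeriod (⇑σ) 0 = k + 1), DW r σ
      = ∑ p ∈ (Finset.univ : Finset ((Fin k ↪ Fin m) × Equiv.Perm (Fin (m - k)))),
          ((1 - (-xx) ^ (k + 1)) ^ r / (1 - ww ^ (k + 1))) * DW r p.2 := by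
    refine (Finset.sum_bij (fun p _ => Phi hk p) ?_ ?_ ?_ ?_).symm
    · intro a _
      rw [Finset.mem_filter]
      exact ⟨Finset.mem_univ _, Phi_minimalPeriod hk a⟩
    · intro a _ b _ h
      exact Phi_injective hk h
    · intro σ hσ
      rw [Finset.mem_filter] at hσ
      obtain ⟨p, hp⟩ := Phi_surjective hk σ hσ.2
      exact ⟨p, Finset.mem_univ p, hp⟩
    · intro p _
      exact (DW_Phi r hk p).symm
  rw [hfiber, Fintype.sum_prod_type]
  have hline : ∀ x : Fin k ↪ Fin m,
      (∑ y : Equiv.Perm (Fin (m - k)),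
          ((1 - (-xx) ^ (k + 1)) ^ r / (1 - ww ^ (k + 1))) * DW r (x, y).2)
        = ((1 - (-xx) ^ (k + 1)) ^ r / (1 - ww ^ (k + 1)))
            * ∑ τ : Equiv.Perm (Fin (m - k)), DW r τ := fun x => by
    rw [← Finset.mul_sum]
  rw [Finset.sum_congr rfl (fun x _ => hline x)]
  rw [Finset.sum_const, Finset.card_univ, Fintype.card_embedding_eq, Fintype.card_fin,
    Fintype.card_fin, nsmul_eq_mul, ← mul_assoc]


/-- For `r ≥ 1` and `n ≥ 1`:
`μ_n = (1/n) Σ_{k=1}^n f((−x)^k, w^k) c_k(w) μ_{n−k}`, where `f(x,w) = (1−x)^r/(1−w)` and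
`c_k(w) = ∏_{i=0}^{k−1}(1 − w^{n−i})`. -/
theorem muRep_recursion (r : ℕ) (hr : 1 ≤ r) (n : ℕ) (hn : 1 ≤ n) :
    muRep r n = (n : FF2)⁻¹ * ∑ k ∈ Finset.Icc 1 n,
      ((1 - (-xx) ^ k) ^ r / (1 - ww ^ k)) *
        (∏ i ∈ Finset.range k, (1 - ww ^ (n - i))) * muRep r (n - k) := by

  obtain ⟨m, rfl⟩ : ∃ m, n = m + 1 := ⟨n - 1, by omega⟩
  have e1 : ∀ j : ℕ, Finset.Icc 1 j = Finset.Ioc 0 j := fun j => by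
    rw [← Finset.Icc_add_one_left_eq_Ioc]; rfl
  have hQ : ∀ k, 1 ≤ k → k ≤ m + 1 →
      (∏ i ∈ Finset.range k, (1 - ww ^ ((m + 1) - i)))
          * ∏ i ∈ Finset.Icc 1 (m + 1 - k), (1 - ww ^ i)
        = ∏ i ∈ Finset.Icc 1 (m + 1), (1 - ww ^ i) := by
    intro k h1 h2
    have h3 : (∏ i ∈ Finset.range k, (1 - ww ^ ((m + 1) - i)))
        = ∏ i ∈ Finset.Ioc (m + 1 - k) (m + 1), (1 - ww ^ i) := by
      refine Finset.prod_nbij' (fun a => m + 1 - a) (fun b => m + 1 - b) ?_ ?_ ?_ ?_ ?_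
      · intro a ha
        rw [Finset.mem_range] at ha
        show m + 1 - a ∈ Finset.Ioc (m + 1 - k) (m + 1)
        rw [Finset.mem_Ioc]
        omega
      · intro b hb
        rw [Finset.mem_Ioc] at hb
        show m + 1 - b ∈ Finset.range k
        rw [Finset.mem_range]
        omega
      · intro a ha
        rw [Finset.mem_range] at ha
        show m + 1 - (m + 1 - a) = a
        omega
      · intro b hb
        rw [Finset.mem_Ioc] at hb
        show m + 1 - (m + 1 - b) = b
        omega
      · intro a _
        rfl
    rw [h3, e1, e1, mul_comm]
    exact Finset.prod_Ioc_consecutive _ (by omega) (by omega)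
  rw [muRep_eq]
  have hterm : ∀ k ∈ Finset.Icc 1 (m + 1),
      ((1 - (-xx) ^ k) ^ r / (1 - ww ^ k))
          * (∏ i ∈ Finset.range k, (1 - ww ^ ((m + 1) - i))) * muRep r ((m + 1) - k)
      = ((1 - (-xx) ^ k) ^ r / (1 - ww ^ k)) *
          ((∏ i ∈ Finset.Icc 1 (m + 1), (1 - ww ^ i)) * ((((m + 1) - k).factorial : FF2))⁻¹
            * ∑ τ : Equiv.Perm (Fin ((m + 1) - k)), DW r τ) := by
    intro k hk
    rw [Finset.mem_Icc] at hk
    rw [muRep_eq, ← hQ k hk.1 hk.2]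
    ring
  rw [Finset.sum_congr rfl hterm]
  set Qn := ∏ i ∈ Finset.Icc 1 (m + 1), (1 - ww ^ i) with hQn
  rw [← Finset.Ico_add_one_right_eq_Icc, Finset.sum_Ico_eq_sum_range,
    show m + 1 + 1 - 1 = m + 1 by omega]
  rw [sum_DW_rec r m]
  rw [Finset.mul_sum, Finset.mul_sum]
  apply Finset.sum_congr rfl
  intro k hk'
  have hk : k ≤ m := by
    rw [Finset.mem_range] at hk'
    omega
  rw [show 1 + k = k + 1 by omega, show m + 1 - (k + 1) = m - k by omega]
  have hnat : (m + 1) * ((m - k).factorial * m.descFactorial k) = (m + 1).factorial := by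
    rw [Nat.factorial_mul_descFactorial (by omega : k ≤ m), Nat.factorial_succ]
  have hcast : ((m + 1 : ℕ) : FF2) * (((m - k).factorial : FF2) * (m.descFactorial k : FF2))
      = ((m + 1).factorial : FF2) := by
    exact_mod_cast congrArg (Nat.cast : ℕ → FF2) hnat
  have hne1 : ((m + 1 : ℕ) : FF2) ≠ 0 := Nat.cast_ne_zero.mpr (by omega)
  have hne2 : (((m - k).factorial : ℕ) : FF2) ≠ 0 :=
    Nat.cast_ne_zero.mpr (Nat.factorial_ne_zero _)
  have hne3 : (((m + 1).factorial : ℕ) : FF2) ≠ 0 :=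
    Nat.cast_ne_zero.mpr (Nat.factorial_ne_zero _)
  have hne4 : ((m.descFactorial k : ℕ) : FF2) ≠ 0 :=
    Nat.cast_ne_zero.mpr (by
      intro h
      rw [Nat.descFactorial_eq_zero_iff_lt] at h
      omega)
  have key : (((m + 1).factorial : FF2))⁻¹ * (m.descFactorial k : FF2)
      = ((m + 1 : ℕ) : FF2)⁻¹ * (((m - k).factorial : FF2))⁻¹ := by
    have h5 : ((m + 1 : ℕ) : FF2) * (((m - k).factorial : ℕ) : FF2)
        * ((m.descFactorial k : ℕ) : FF2) = (((m + 1).factorial : ℕ) : FF2) := by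
      linear_combination hcast
    rw [← h5, mul_inv, mul_inv, mul_assoc, inv_mul_cancel₀ hne4, mul_one]
  calc Qn * ((((m + 1).factorial : ℕ) : FF2))⁻¹ *
        ((m.descFactorial k : FF2) * ((1 - (-xx) ^ (k + 1)) ^ r / (1 - ww ^ (k + 1)))
          * ∑ τ : Equiv.Perm (Fin (m - k)), DW r τ)
      = ((((m + 1).factorial : ℕ) : FF2)⁻¹ * (m.descFactorial k : FF2))
          * (Qn * ((1 - (-xx) ^ (k + 1)) ^ r / (1 - ww ^ (k + 1)))
            * ∑ τ : Equiv.Perm (Fin (m - k)), DW r τ) := by ring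
    _ = (((m + 1 : ℕ) : FF2)⁻¹ * (((m - k).factorial : FF2))⁻¹)
          * (Qn * ((1 - (-xx) ^ (k + 1)) ^ r / (1 - ww ^ (k + 1)))
            * ∑ τ : Equiv.Perm (Fin (m - k)), DW r τ) := by rw [key]
    _ = ((m + 1 : ℕ) : FF2)⁻¹ * (((1 - (-xx) ^ (k + 1)) ^ r / (1 - ww ^ (k + 1)))
          * (Qn * ((((m - k).factorial : ℕ) : FF2))⁻¹
            * ∑ τ : Equiv.Perm (Fin (m - k)), DW r τ)) := by ring
end

section
/- Fix an integer r ≥ 1. In the polynomial ring ℚ[x] define, for each integer j ≥ 0, ν_j := (1/j!)·Σ_{σ ∈ S_j} det(I_j + x·P_σ)^r, with ν_0 = 1. Then for every n ≥ 1: ν_n = (1/n)·Σ_{k=1}^{n} (1 − (−x)^k)^r · ν_{n−k}. -/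
open Polynomial Equiv Finset Function

namespace NuAux

noncomputable def pm {α : Type*} [DecidableEq α] (σ : Equiv.Perm α) :
    Matrix α α ℚ[X] :=
  Matrix.of fun i l => if σ l = i then 1 else 0

noncomputable def Dp {α : Type*} [DecidableEq α] [Fintype α] (σ : Equiv.Perm α) : ℚ[X] :=
  Matrix.det (1 + (Polynomial.X : ℚ[X]) • pm σ)

lemma pm_permCongr {α β : Type*} [DecidableEq α] [DecidableEq β]
    (e : α ≃ β) (σ : Equiv.Perm α) :
    pm (e.permCongr σ) = (pm σ).submatrix e.symm e.symm := by
  ext i l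
  simp [pm, Equiv.permCongr_apply, Equiv.apply_eq_iff_eq_symm_apply]

lemma Dp_permCongr {α β : Type*} [DecidableEq α] [Fintype α] [DecidableEq β] [Fintype β]
    (e : α ≃ β) (σ : Equiv.Perm α) : Dp (e.permCongr σ) = Dp σ := by
  unfold Dp
  rw [pm_permCongr]
  have h : (1 : Matrix β β ℚ[X]) + (X : ℚ[X]) • (pm σ).submatrix e.symm e.symm
      = ((1 + (X : ℚ[X]) • pm σ)).submatrix (e.symm) (e.symm) := by
    ext i l
    simp [Matrix.add_apply, Matrix.smul_apply, Matrix.one_apply]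
  rw [h, Matrix.det_submatrix_equiv_self]

lemma Dp_sumCongr {α β : Type*} [DecidableEq α] [Fintype α] [DecidableEq β] [Fintype β]
    (σ : Equiv.Perm α) (τ : Equiv.Perm β) :
    Dp (Equiv.sumCongr σ τ) = Dp σ * Dp τ := by
  have h : pm (Equiv.sumCongr σ τ) = Matrix.fromBlocks (pm σ) 0 0 (pm τ) := by
    ext i l
    cases i <;> cases l <;> simp [pm, Matrix.fromBlocks]
  unfold Dp
  rw [h, ← Matrix.det_fromBlocks_zero₁₂ (1 + (X : ℚ[X]) • pm σ) 0 (1 + (X : ℚ[X]) • pm τ)]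
  congr 1
  rw [← Matrix.fromBlocks_one, Matrix.fromBlocks_smul, Matrix.fromBlocks_add]
  simp

lemma Dp_subtypeCongr {α : Type*} [Fintype α] [DecidableEq α] {p : α → Prop} [DecidablePred p]
    (ep : Equiv.Perm {a // p a}) (en : Equiv.Perm {a // ¬ p a}) :
    Dp (ep.subtypeCongr en) = Dp ep * Dp en := by
  rw [show ep.subtypeCongr en = (Equiv.sumCompl p).permCongr (Equiv.sumCongr ep en) from rfl,
    Dp_permCongr, Dp_sumCongr]


lemma Dp_finRotate (m : ℕ) : Dp (finRotate (m+1)) = 1 - (-(X : ℚ[X])) ^ (m+1) := by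
  cases m with
  | zero =>
      have : finRotate 1 = 1 := Subsingleton.elim _ _
      simp [Dp, pm, this, Matrix.det_fin_one, Matrix.one_apply]
  | succ m =>
      set M : Matrix (Fin (m+2)) (Fin (m+2)) ℚ[X] := 1 + (X : ℚ[X]) • pm (finRotate (m+2)) with hM
      have hentry : ∀ i l : Fin (m+2), M i l =
          (if i = l then 1 else 0) + X * (if finRotate (m+2) l = i then 1 else 0) := by
        intro i l
        simp [hM, Matrix.add_apply, Matrix.smul_apply, Matrix.one_apply, pm]
      have hne : (0 : Fin (m+2)) ≠ Fin.last (m+1) := by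
        simp [Fin.ext_iff]
      -- value of top row
      have hM00 : M 0 0 = 1 := by
        rw [hentry]
        rw [if_pos rfl, if_neg (by simp [finRotate_succ_apply, Fin.ext_iff])]
        ring
      have hM0last : M 0 (Fin.last (m+1)) = X := by
        rw [hentry]
        rw [if_neg hne, if_pos finRotate_last]
        ring
      have hzero : ∀ j : Fin (m+2), j ≠ 0 → j ≠ Fin.last (m+1) → M 0 j = 0 := by
        intro j h0 hl
        rw [hentry, if_neg (fun h => h0 h.symm), if_neg, mul_zero, add_zero]
        intro h
        exact hl ((finRotate (m+2)).injective (h.trans finRotate_last.symm))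
      -- minor at column 0
      have hA : Matrix.det (M.submatrix Fin.succ ((0 : Fin (m+2)).succAbove)) = 1 := by
        rw [Fin.succAbove_zero]
        rw [Matrix.det_of_lowerTriangular]
        · apply Finset.prod_eq_one
          intro i _
          rw [Matrix.submatrix_apply, hentry, if_pos rfl, if_neg, mul_zero, add_zero]
          intro h
          have hv := congrArg Fin.val (finRotate_succ_apply (i.succ) ▸ h)
          rw [Fin.val_add_one] at hv
          split_ifs at hv with hlast
          · exact (Nat.succ_ne_zero _ hv.symm)
          · omega
        · intro i j hij
          rw [Matrix.submatrix_apply, hentry, if_neg, if_neg, mul_zero, add_zero]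
          · intro h
            have hv := congrArg Fin.val (finRotate_succ_apply (j.succ) ▸ h)
            rw [Fin.val_add_one] at hv
            split_ifs at hv with hlast
            · exact (Nat.succ_ne_zero _ hv.symm)
            · simp only [Fin.val_succ] at hv
              have : (i : ℕ) < (j : ℕ) := hij
              omega
          · intro h
            have := congrArg Fin.val h
            simp only [Fin.val_succ] at this
            have : (i : ℕ) < (j : ℕ) := hij
            omega
      -- minor at column last
      have hB : Matrix.det (M.submatrix Fin.succ ((Fin.last (m+1)).succAbove)) = X ^ (m+1) := by
        rw [Fin.succAbove_last]
        rw [Matrix.det_of_upperTriangular]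
        · rw [Finset.prod_congr rfl (g := fun _ => (X:ℚ[X])), Finset.prod_const, Finset.card_univ,
            Fintype.card_fin]
          intro i _
          rw [Matrix.submatrix_apply, hentry, if_neg, if_pos, mul_one, zero_add]
          · rw [finRotate_succ_apply]
            apply Fin.ext
            rw [Fin.val_add_one, if_neg (Fin.castSucc_lt_last i).ne]
            simp
          · intro h
            have := congrArg Fin.val h
            simp at this
        · intro i j hij
          rw [Matrix.submatrix_apply, hentry, if_neg, if_neg, mul_zero, add_zero]
          · intro h
            have hv := congrArg Fin.val (finRotate_succ_apply (j.castSucc) ▸ h)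
            rw [Fin.val_add_one, if_neg (Fin.castSucc_lt_last j).ne] at hv
            simp only [Fin.val_succ, Fin.coe_castSucc] at hv
            have : (j : ℕ) < (i : ℕ) := hij
            omega
          · intro h
            have := congrArg Fin.val h
            simp only [Fin.val_succ, Fin.coe_castSucc] at this
            have : (j : ℕ) < (i : ℕ) := hij
            omega
      have hdet := Matrix.det_succ_row_zero M
      rw [show Finset.univ = ({0, Fin.last (m+1)} : Finset (Fin (m+2))) ∪
        (Finset.univ \ {0, Fin.last (m+1)}) from ?_] at hdet
      rotate_left
      · rw [Finset.union_sdiff_of_subset (Finset.subset_univ _)]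
      rw [Finset.sum_union (Finset.disjoint_sdiff), Finset.sum_pair hne] at hdet
      rw [Finset.sum_eq_zero (fun j hj => ?_), add_zero] at hdet
      rotate_left
      · simp only [Finset.mem_sdiff, Finset.mem_insert, Finset.mem_singleton, not_or] at hj
        rw [hzero j hj.2.1 hj.2.2, mul_zero, zero_mul]
      rw [hM00, hM0last, hA, hB] at hdet
      show M.det = _
      rw [hdet]
      simp only [Fin.val_zero, Fin.val_last, pow_zero]
      have hnp : (-(X:ℚ[X])) ^ (m+2) = (-1)^(m+2) * X^(m+2) := by
        rw [neg_pow]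
      rw [hnp, pow_succ (-1 : ℚ[X]) (m+1)]
      ring

lemma fiber_sum (r m j : ℕ) (g : Fin (j+1) → Fin (m+1)) (hginj : Function.Injective g)
    (hg0 : g 0 = 0) :
    ∑ σ ∈ Finset.univ.filter (fun σ : Equiv.Perm (Fin (m+1)) =>
        Function.minimalPeriod σ 0 = j+1 ∧ (fun i : Fin (j+1) => σ^[(i:ℕ)] 0) = g),
      Dp σ ^ r
    = (1 - (-(X:ℚ[X]))^(j+1))^r *
        ∑ τ : Equiv.Perm {x : Fin (m+1) // ¬ ∃ i, g i = x}, Dp τ ^ r := by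
  classical
  set p : Fin (m+1) → Prop := fun x => ∃ i : Fin (j+1), g i = x with hp
  have hp0 : p 0 := ⟨0, hg0⟩
  let eg : Fin (j+1) ≃ {x // p x} := Equiv.ofInjective g hginj
  have hegcoe : ∀ i, ((eg i : {x // p x}) : Fin (m+1)) = g i := fun i => rfl
  let cyc : Equiv.Perm {x // p x} := eg.permCongr (finRotate (j+1))
  let Φ : Equiv.Perm {x : Fin (m+1) // ¬ p x} → Equiv.Perm (Fin (m+1)) :=
    fun τ => Equiv.Perm.subtypeCongr cyc τ
  -- (F1)
  have hΦg : ∀ τ i, Φ τ (g i) = g (finRotate (j+1) i) := by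
    intro τ i
    have hpi : p (g i) := ⟨i, rfl⟩
    show Equiv.Perm.subtypeCongr cyc τ (g i) = _
    rw [Equiv.Perm.subtypeCongr.left_apply _ _ hpi]
    have h1 : (⟨g i, hpi⟩ : {x // p x}) = eg i := Subtype.ext rfl
    rw [h1]
    show ((eg.permCongr (finRotate (j+1))) (eg i) : Fin (m+1)) = _
    rw [Equiv.permCongr_apply, Equiv.symm_apply_apply, hegcoe]
  -- (F2)
  have hΦiter : ∀ τ, ∀ i : ℕ, (hi : i ≤ j) → (Φ τ)^[i] 0 = g ⟨i, Nat.lt_succ_of_le hi⟩ := by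
    intro τ i
    induction i with
    | zero =>
        intro _
        have h0 : (⟨0, Nat.lt_succ_of_le (Nat.zero_le j)⟩ : Fin (j+1)) = 0 := Fin.ext rfl
        rw [Function.iterate_zero_apply, h0, hg0]
    | succ i ih =>
        intro hi
        rw [Function.iterate_succ_apply', ih (Nat.le_of_succ_le hi), hΦg]
        congr 1
        have hne : (⟨i, Nat.lt_succ_of_le (Nat.le_of_succ_le hi)⟩ : Fin (j+1)) ≠ Fin.last j := by
          simp only [ne_eq, Fin.ext_iff, Fin.val_last]
          omega
        rw [finRotate_succ_apply]
        apply Fin.ext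
        rw [Fin.val_add_one, if_neg hne]
  -- (F3)
  have hΦper : ∀ τ, (Φ τ)^[j+1] 0 = 0 := by
    intro τ
    rw [Function.iterate_succ_apply', hΦiter τ j le_rfl, hΦg]
    have : (⟨j, Nat.lt_succ_of_le le_rfl⟩ : Fin (j+1)) = Fin.last j := rfl
    rw [this, finRotate_last, hg0]
  -- (F4)
  have hΦmp : ∀ τ, Function.minimalPeriod (Φ τ) 0 = j+1 := by
    intro τ
    have hper : Function.IsPeriodicPt (Φ τ) (j+1) 0 := hΦper τ
    have hle := hper.minimalPeriod_le (Nat.succ_pos _)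
    have hpos := hper.minimalPeriod_pos (Nat.succ_pos _)
    by_contra hne
    have hlt : Function.minimalPeriod (Φ τ) 0 ≤ j := by omega
    have h1 : (Φ τ)^[Function.minimalPeriod (Φ τ) 0] 0 = 0 :=
      Function.iterate_minimalPeriod
    rw [hΦiter τ _ hlt] at h1
    have := hginj (h1.trans hg0.symm)
    simp only [Fin.ext_iff, Fin.val_zero] at this
    omega
  -- restriction map
  have hrestr : ∀ σ : Equiv.Perm (Fin (m+1)),
      Function.minimalPeriod σ 0 = j+1 → (∀ i : Fin (j+1), σ^[(i:ℕ)] 0 = g i) →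
      (∀ x, ¬ p x ↔ ¬ p (σ x)) := by
    intro σ hmp hit x
    have hper : σ^[j+1] 0 = 0 := by
      rw [← hmp]; exact Function.iterate_minimalPeriod
    constructor
    · -- ¬ p x → ¬ p (σ x): contrapositive: p (σ x) → p x
      intro hnx hpx
      apply hnx
      obtain ⟨i, hi⟩ := hpx
      by_cases h0 : (i : ℕ) = 0
      · -- σ x = g i = g 0 = 0 = σ^[j+1] 0 = σ (σ^[j] 0)
        have hi0 : i = 0 := Fin.ext h0
        have h2 : σ x = σ (σ^[j] 0) := by
          rw [← Function.iterate_succ_apply' σ j 0, hper, ← hi, hi0, hg0]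
        refine ⟨⟨j, Nat.lt_succ_self j⟩, ?_⟩
        rw [← hit ⟨j, Nat.lt_succ_self j⟩]
        exact (σ.injective h2).symm
      · -- σ x = g i = σ^[i] 0 = σ (σ^[i-1] 0)
        have hilt : (i:ℕ) - 1 < j + 1 := by omega
        have h2 : σ x = σ (σ^[(i:ℕ)-1] 0) := by
          rw [← Function.iterate_succ_apply' σ ((i:ℕ)-1) 0, hi.symm, ← hit i]
          congr 1
          omega
        refine ⟨⟨(i:ℕ)-1, hilt⟩, ?_⟩
        rw [← hit ⟨(i:ℕ)-1, hilt⟩]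
        exact (σ.injective h2).symm
    · -- ¬ p (σ x) → ¬ p x
      intro hnx hpx
      apply hnx
      obtain ⟨i, hi⟩ := hpx
      by_cases hij : (i : ℕ) = j
      · refine ⟨0, ?_⟩
        rw [hg0, ← hper]
        rw [Function.iterate_succ_apply']
        rw [← hi]
        congr 2
        rw [← hit i, hij]
      · have hlt : (i:ℕ)+1 < j+1 := by have := i.isLt; omega
        refine ⟨⟨(i:ℕ)+1, hlt⟩, ?_⟩
        rw [← hit ⟨(i:ℕ)+1, hlt⟩]
        show σ^[(i:ℕ)+1] 0 = σ x
        rw [Function.iterate_succ_apply', ← hi]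
        congr 1
        exact hit i
  -- σ (g i) = g (finRotate i) for σ in fiber
  have hσg : ∀ σ : Equiv.Perm (Fin (m+1)),
      Function.minimalPeriod σ 0 = j+1 → (∀ i : Fin (j+1), σ^[(i:ℕ)] 0 = g i) →
      ∀ i, σ (g i) = g (finRotate (j+1) i) := by
    intro σ hmp hit i
    have hper : σ^[j+1] 0 = 0 := by
      rw [← hmp]; exact Function.iterate_minimalPeriod
    by_cases hij : i = Fin.last j
    · rw [hij, finRotate_last, hg0, ← hit (Fin.last j)]
      exact (Function.iterate_succ_apply' σ j 0).symm.trans hper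
    · have hlt : (i:ℕ)+1 < j+1 := by
        have := i.isLt
        rcases Nat.lt_or_ge ((i:ℕ)+1) (j+1) with h | h
        · exact h
        · exact absurd (Fin.ext (by omega : (i:ℕ) = j)) hij
      have h1 : finRotate (j+1) i = ⟨(i:ℕ)+1, hlt⟩ := by
        rw [finRotate_succ_apply]
        apply Fin.ext
        rw [Fin.val_add_one, if_neg hij]
      rw [h1, ← hit ⟨(i:ℕ)+1, hlt⟩, ← hit i]
      exact (Function.iterate_succ_apply' σ (i:ℕ) 0).symm
  -- the bijection
  rw [Finset.mul_sum]
  refine Finset.sum_bij' (i := fun σ hσ => Equiv.Perm.subtypePerm σ ?_)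
    (j := fun τ _ => Φ τ) ?_ ?_ ?_ ?_ ?_
  · -- preservation hypothesis
    simp only [Finset.mem_filter] at hσ
    exact fun x => (hrestr σ hσ.2.1 (fun i => congrFun hσ.2.2 i) x).symm
  · intro σ hσ; exact Finset.mem_univ _
  · -- Φ τ lands in the fiber
    intro τ _
    simp only [Finset.mem_filter]
    refine ⟨Finset.mem_univ _, hΦmp τ, funext fun i => ?_⟩
    have := hΦiter τ (i:ℕ) (by omega : (i:ℕ) ≤ j)
    simpa using this
  · -- left inverse : Φ (restrict σ) = σ
    intro σ hσ
    simp only [Finset.mem_filter] at hσ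
    have hit : ∀ i : Fin (j+1), σ^[(i:ℕ)] 0 = g i := fun i => congrFun hσ.2.2 i
    apply Equiv.ext
    intro x
    by_cases hx : p x
    · obtain ⟨i, rfl⟩ := hx
      rw [hΦg, hσg σ hσ.2.1 hit]
    · show Equiv.Perm.subtypeCongr cyc _ x = σ x
      rw [Equiv.Perm.subtypeCongr.right_apply _ _ hx]
      rfl
  · -- right inverse
    intro τ _
    apply Equiv.ext
    intro x
    apply Subtype.ext
    exact Equiv.Perm.subtypeCongr.right_apply (p := p) cyc τ x.2
  · -- values match
    intro σ hσ
    simp only [Finset.mem_filter] at hσ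
    have hit : ∀ i : Fin (j+1), σ^[(i:ℕ)] 0 = g i := fun i => congrFun hσ.2.2 i
    have hΦeq : Φ (Equiv.Perm.subtypePerm σ (fun x => (hrestr σ hσ.2.1 hit x).symm)) = σ := by
      apply Equiv.ext
      intro x
      by_cases hx : p x
      · obtain ⟨i, rfl⟩ := hx
        rw [hΦg, hσg σ hσ.2.1 hit]
      · show Equiv.Perm.subtypeCongr cyc _ x = σ x
        rw [Equiv.Perm.subtypeCongr.right_apply _ _ hx]
        rfl
    calc Dp σ ^ r = Dp (Φ (Equiv.Perm.subtypePerm σ (fun x => (hrestr σ hσ.2.1 hit x).symm))) ^ r := by rw [hΦeq]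
    _ = ((1 - (-(X:ℚ[X]))^(j+1)) * Dp (Equiv.Perm.subtypePerm σ (fun x => (hrestr σ hσ.2.1 hit x).symm))) ^ r := by
        show Dp (Equiv.Perm.subtypeCongr cyc _) ^ r = _
        rw [Dp_subtypeCongr]
        congr 2
        show Dp (eg.permCongr (finRotate (j+1))) = _
        rw [Dp_permCongr, Dp_finRotate]
    _ = _ := by rw [mul_pow]

lemma count_g (m j : ℕ) :
    ((Finset.univ.filter (fun g : Fin (j+1) → Fin (m+1) =>
       Function.Injective g ∧ g 0 = 0)).card) = m.descFactorial j := by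
  classical
  rw [← Fintype.card_subtype]
  have e : {g : Fin (j+1) → Fin (m+1) // Function.Injective g ∧ g 0 = 0} ≃
      (Fin j ↪ {x : Fin (m+1) // x ≠ 0}) :=
    { toFun := fun gh =>
        ⟨fun i => ⟨gh.1 i.succ, fun h => (Fin.succ_ne_zero i) (gh.2.1 (h.trans gh.2.2.symm))⟩,
         fun a b hab => Fin.succ_injective _ (gh.2.1 (congrArg Subtype.val hab))⟩
      invFun := fun e =>
        ⟨fun i => Fin.cases 0 (fun i' => (e i').1) i, by
          constructor
          · intro a b hab
            induction a using Fin.cases with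
            | zero =>
                induction b using Fin.cases with
                | zero => rfl
                | succ b' =>
                    simp only [Fin.cases_zero, Fin.cases_succ] at hab
                    exact absurd hab.symm (e b').2
            | succ a' =>
                induction b using Fin.cases with
                | zero =>
                    simp only [Fin.cases_zero, Fin.cases_succ] at hab
                    exact absurd hab (e a').2
                | succ b' =>
                    simp only [Fin.cases_succ] at hab
                    exact congrArg Fin.succ (e.injective (Subtype.ext hab))
          · exact rfl⟩
      left_inv := by
        intro gh
        apply Subtype.ext
        funext i
        induction i using Fin.cases with
        | zero => simp only [Fin.cases_zero]; exact gh.2.2.symm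
        | succ i' => simp only [Fin.cases_succ]; rfl
      right_inv := by
        intro e
        apply DFunLike.ext
        intro i
        apply Subtype.ext
        simp only [Function.Embedding.coeFn_mk, Fin.cases_succ]
    }
  rw [Fintype.card_congr e, Fintype.card_embedding_eq, Fintype.card_fin]
  congr 1
  have : Fintype.card {x : Fin (m+1) // x ≠ 0} = Fintype.card (Fin (m+1)) -
      Fintype.card {x : Fin (m+1) // x = 0} := Fintype.card_subtype_compl _
  rw [this, Fintype.card_subtype_eq, Fintype.card_fin]
  omega

lemma mp_mem (m : ℕ) (σ : Equiv.Perm (Fin (m+1))) :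
    Function.minimalPeriod σ 0 ∈ Finset.Icc 1 (m+1) := by
  have hper : Function.IsPeriodicPt σ (orderOf σ) 0 := by
    show (⇑σ)^[orderOf σ] 0 = 0
    rw [Equiv.Perm.iterate_eq_pow, pow_orderOf_eq_one]
    rfl
  have hpos : 0 < Function.minimalPeriod (⇑σ) 0 :=
    hper.minimalPeriod_pos (orderOf_pos σ)
  have hle : Function.minimalPeriod (⇑σ) 0 ≤ m+1 := by
    have hinj := Function.iterate_injOn_Iio_minimalPeriod (f := ⇑σ) (x := (0 : Fin (m+1)))
    have := Finset.card_le_card_of_injOn (f := fun i : ℕ => (⇑σ)^[i] (0 : Fin (m+1)))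
      (s := Finset.range (Function.minimalPeriod (⇑σ) 0)) (t := Finset.univ)
      (fun a _ => Finset.mem_univ _)
      (fun a ha b hb hab => hinj (by simpa using ha) (by simpa using hb) hab)
    simpa using this
  exact Finset.mem_Icc.mpr ⟨hpos, hle⟩

lemma key (r m : ℕ) :
    ∑ σ : Equiv.Perm (Fin (m+1)), Dp σ ^ r
    = ∑ k ∈ Finset.Icc 1 (m+1), (m.descFactorial (k-1) : ℚ[X]) *
        ((1 - (-(X:ℚ[X]))^k)^r * ∑ τ : Equiv.Perm (Fin (m+1-k)), Dp τ ^ r) := by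
  classical
  rw [← Finset.sum_fiberwise_of_maps_to (g := fun σ : Equiv.Perm (Fin (m+1)) =>
      Function.minimalPeriod (⇑σ) 0) (t := Finset.Icc 1 (m+1)) (fun σ _ => mp_mem m σ)]
  apply Finset.sum_congr rfl
  intro k hk
  have hk' : 1 ≤ k ∧ k ≤ m+1 := by simpa using Finset.mem_Icc.mp hk
  obtain ⟨j, rfl⟩ : ∃ j, k = j + 1 := ⟨k-1, by omega⟩
  have hmaps : ∀ σ ∈ Finset.univ.filter (fun σ : Equiv.Perm (Fin (m+1)) =>
      Function.minimalPeriod (⇑σ) 0 = j+1),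
      (fun i : Fin (j+1) => (⇑σ)^[(i:ℕ)] 0) ∈
        Finset.univ.filter (fun g : Fin (j+1) → Fin (m+1) =>
          Function.Injective g ∧ g 0 = 0) := by
    intro σ hσ
    rw [Finset.mem_filter] at hσ ⊢
    refine ⟨Finset.mem_univ _, fun a b hab => ?_, rfl⟩
    have hinj := Function.iterate_injOn_Iio_minimalPeriod (f := ⇑σ) (x := (0 : Fin (m+1)))
    have ha : (a : ℕ) ∈ Set.Iio (Function.minimalPeriod (⇑σ) 0) := by
      rw [hσ.2]; exact a.isLt
    have hb : (b : ℕ) ∈ Set.Iio (Function.minimalPeriod (⇑σ) 0) := by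
      rw [hσ.2]; exact b.isLt
    exact Fin.ext (hinj ha hb hab)
  rw [← Finset.sum_fiberwise_of_maps_to hmaps]
  have hstep : ∀ g ∈ Finset.univ.filter (fun g : Fin (j+1) → Fin (m+1) =>
      Function.Injective g ∧ g 0 = 0),
      ∑ σ ∈ (Finset.univ.filter (fun σ : Equiv.Perm (Fin (m+1)) =>
          Function.minimalPeriod (⇑σ) 0 = j+1)).filter
          (fun σ : Equiv.Perm (Fin (m+1)) => (fun i : Fin (j+1) => (⇑σ)^[(i:ℕ)] 0) = g), Dp σ ^ r
      = (1 - (-(X:ℚ[X]))^(j+1))^r * ∑ τ : Equiv.Perm (Fin (m+1-(j+1))), Dp τ ^ r := by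
    intro g hg
    rw [Finset.mem_filter] at hg
    obtain ⟨-, hginj, hg0⟩ := hg
    rw [Finset.filter_filter]
    rw [fiber_sum r m j g hginj hg0]
    congr 1
    have h1 : Fintype.card {x : Fin (m+1) // ∃ i : Fin (j+1), g i = x} = j+1 := by
      have e : {x : Fin (m+1) // ∃ i : Fin (j+1), g i = x} ≃ Fin (j+1) :=
        (Equiv.subtypeEquivRight (fun x => Iff.rfl)).trans (Equiv.ofInjective g hginj).symm
      rw [Fintype.card_congr e, Fintype.card_fin]
    have hcard : Fintype.card {x : Fin (m+1) // ¬ ∃ i : Fin (j+1), g i = x} = m+1-(j+1) := by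
      rw [Fintype.card_subtype_compl, h1, Fintype.card_fin]
    exact Fintype.sum_equiv (Equiv.permCongr (Fintype.equivFinOfCardEq hcard)) _ _
      (fun τ => by rw [← Dp_permCongr (Fintype.equivFinOfCardEq hcard) τ])
  rw [Finset.sum_congr rfl hstep, Finset.sum_const, count_g m j, nsmul_eq_mul]
  simp only [Nat.add_sub_cancel]

end NuAux

/-- `ν_j = (1/j!) Σ_{σ ∈ S_j} det(I + x P_σ)^r ∈ ℚ[x]` (so `ν_0 = 1`). -/
noncomputable def nuChar (r : ℕ) (j : ℕ) : ℚ[X] :=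
  ((j.factorial : ℚ)⁻¹) •
    ∑ σ : Equiv.Perm (Fin j),
      (Matrix.det (1 + (Polynomial.X : ℚ[X]) • permMatrix ℚ[X] σ)) ^ r

/-- For `r ≥ 1` and every `n ≥ 1`:
`ν_n = (1/n) Σ_{k=1}^n (1 − (−x)^k)^r ν_{n−k}`. -/
theorem nuChar_recursion (r : ℕ) (hr : 1 ≤ r) (n : ℕ) (hn : 1 ≤ n) :
    nuChar r n = ((n : ℚ)⁻¹) • ∑ k ∈ Finset.Icc 1 n,
      (1 - (-(Polynomial.X : ℚ[X])) ^ k) ^ r * nuChar r (n - k) := by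
  obtain ⟨m, rfl⟩ : ∃ m, n = m + 1 := ⟨n-1, by omega⟩
  have hT : ∀ i : ℕ, nuChar r i
      = ((i.factorial : ℚ)⁻¹) • ∑ σ : Equiv.Perm (Fin i), NuAux.Dp σ ^ r := fun i => rfl
  rw [hT, NuAux.key r m, Finset.smul_sum, Finset.smul_sum]
  apply Finset.sum_congr rfl
  intro k hk
  have hk' : 1 ≤ k ∧ k ≤ m+1 := by simpa using Finset.mem_Icc.mp hk
  rw [hT (m+1-k)]
  have hcast : ((m.descFactorial (k-1) : ℕ) : ℚ[X]) * ((1 - (-(X:ℚ[X]))^k)^r *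
        ∑ τ : Equiv.Perm (Fin (m+1-k)), NuAux.Dp τ ^ r)
      = ((m.descFactorial (k-1) : ℕ) : ℚ) • ((1 - (-(X:ℚ[X]))^k)^r *
        ∑ τ : Equiv.Perm (Fin (m+1-k)), NuAux.Dp τ ^ r) := by
    rw [Polynomial.smul_eq_C_mul, Polynomial.C_eq_natCast]
  rw [hcast, mul_smul_comm, smul_smul, smul_smul]
  congr 1
  have hnat : ((m+1-k).factorial * m.descFactorial (k-1)) = m.factorial := by
    have h := Nat.factorial_mul_descFactorial (n := m) (k := k-1) (by omega)
    rw [show m - (k-1) = m+1-k by omega] at h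
    exact h
  have h2 : (((m+1-k).factorial : ℕ) : ℚ) ≠ 0 := Nat.cast_ne_zero.mpr (Nat.factorial_ne_zero _)
  have h3 : (((m+1).factorial : ℕ) : ℚ) ≠ 0 := Nat.cast_ne_zero.mpr (Nat.factorial_ne_zero _)
  have h4 : (((m+1 : ℕ)) : ℚ) ≠ 0 := Nat.cast_ne_zero.mpr (Nat.succ_ne_zero m)
  have hfac : (((m+1).factorial : ℕ) : ℚ) = ((m+1 : ℕ) : ℚ) * (m.factorial : ℚ) := by
    rw [Nat.factorial_succ]; push_cast; ring
  field_simp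
  rw [hfac]
  push_cast [← hnat]
  ring
end

section
/- Fix integers r ≥ 1 and n ≥ 1, and let F be the field of fractions of the polynomial ring ℚ[x,w]. For σ ∈ S_n let f_σ be the coordinate-permutation endomorphism of F^n and g_σ its restriction to the invariant hyperplane V₀ = {v ∈ F^n : v_1 + ⋯ + v_n = 0}. Then (∏_{i=1}^{n}(1 − w^i)) · (1/n!) · Σ_{σ ∈ S_n} det(id + x·f_σ)^r / det(id − w·f_σ) = (1 + x)^r · (∏_{i=2}^{n}(1 − w^i)) · (1/n!) · Σ_{σ ∈ S_n} det(id_{V₀} + x·g_σ)^r / det(id_{V₀} − w·g_σ). (In other words, the mixed Hodge polynomial formula for the GL(n,ℂ)-representation variety equals (1+x)^r times the one for SL(n,ℂ).) -/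
set_option maxHeartbeats 1600000


/-- The coordinate-permutation endomorphism of `F^n`: `(f_σ v) i = v (σ⁻¹ i)`. -/
noncomputable def permEndo (F : Type*) [Field F] {n : ℕ} (σ : Equiv.Perm (Fin n)) :
    (Fin n → F) →ₗ[F] (Fin n → F) :=
  LinearMap.funLeft F F ⇑σ⁻¹

/-- The hyperplane `V₀ = {v ∈ F^n : v 1 + ⋯ + v n = 0}`. -/
noncomputable def zeroSumHyperplane (F : Type*) [Field F] (n : ℕ) :
    Submodule F (Fin n → F) :=
  LinearMap.ker (∑ i : Fin n, LinearMap.proj (R := F) (φ := fun _ : Fin n => F) i)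

/-- determinant of a product map -/
lemma my_det_prodMap {K M N : Type*} [Field K] [AddCommGroup M] [Module K M]
    [AddCommGroup N] [Module K N] [FiniteDimensional K M] [FiniteDimensional K N]
    (f : M →ₗ[K] M) (g : N →ₗ[K] N) :
    LinearMap.det (f.prodMap g) = LinearMap.det f * LinearMap.det g := by
  classical
  let b := Module.finBasis K M
  let c := Module.finBasis K N
  rw [← LinearMap.det_toMatrix (b.prod c), LinearMap.toMatrix_prodMap b c f g,
    Matrix.det_fromBlocks_zero₁₂, LinearMap.det_toMatrix, LinearMap.det_toMatrix]

/-- determinant decomposes along complementary invariant submodules -/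
lemma my_det_restrict_mul {K V : Type*} [Field K] [AddCommGroup V] [Module K V]
    [FiniteDimensional K V] {p q : Submodule K V} (hpq : IsCompl p q)
    (f : V →ₗ[K] V) (hp : ∀ v ∈ p, f v ∈ p) (hq : ∀ v ∈ q, f v ∈ q) :
    LinearMap.det f = LinearMap.det (f.restrict hp) * LinearMap.det (f.restrict hq) := by
  classical
  set e := Submodule.prodEquivOfIsCompl p q hpq
  have key : (e : p × q →ₗ[K] V) ∘ₗ ((f.restrict hp).prodMap (f.restrict hq)) ∘ₗ
      (e.symm : V →ₗ[K] (p × q)) = f := by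
    apply LinearMap.ext
    intro v
    obtain ⟨z, rfl⟩ := e.surjective v
    simp only [LinearMap.comp_apply, LinearEquiv.coe_coe, LinearEquiv.symm_apply_apply]
    rw [Submodule.coe_prodEquivOfIsCompl', Submodule.coe_prodEquivOfIsCompl']
    simp only [LinearMap.prodMap_apply]
    rw [LinearMap.restrict_coe_apply, LinearMap.restrict_coe_apply, map_add]
  have := congrArg LinearMap.det key
  rw [LinearMap.det_conj, my_det_prodMap] at this
  exact this.symm

lemma perm_fix_const {n : ℕ} (σ : Equiv.Perm (Fin n)) (v : Fin n → FF2)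
    (hv : v ∈ Submodule.span FF2 {(fun _ => (1 : FF2) : Fin n → FF2)}) :
    permEndo FF2 σ v = v := by
  rw [Submodule.mem_span_singleton] at hv
  obtain ⟨a, rfl⟩ := hv
  ext i
  simp [permEndo, LinearMap.funLeft_apply]

lemma compl_span_one {n : ℕ} (hn : 1 ≤ n) :
    IsCompl (zeroSumHyperplane FF2 n)
      (Submodule.span FF2 {(fun _ => (1 : FF2) : Fin n → FF2)}) := by
  have hnne : (n : FF2) ≠ 0 := Nat.cast_ne_zero.mpr (by omega)
  constructor
  · rw [Submodule.disjoint_def]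
    intro v hv hv'
    rw [Submodule.mem_span_singleton] at hv'
    obtain ⟨a, rfl⟩ := hv'
    simp only [zeroSumHyperplane, LinearMap.mem_ker, LinearMap.sum_apply,
      LinearMap.proj_apply] at hv
    have : a * n = 0 := by
      simpa [Finset.mul_sum, mul_comm] using hv
    have ha : a = 0 := by
      rcases mul_eq_zero.mp this with h' | h'
      · exact h'
      · exact absurd h' hnne
    simp [ha]
  · rw [codisjoint_iff_le_sup]
    intro v _
    set s : FF2 := ∑ i : Fin n, v i
    have h1 : (fun i => v i - s / n : Fin n → FF2) ∈ zeroSumHyperplane FF2 n := by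
      simp only [zeroSumHyperplane, LinearMap.mem_ker, LinearMap.sum_apply,
        LinearMap.proj_apply]
      rw [Finset.sum_sub_distrib]
      simp [Finset.sum_const, div_eq_mul_inv, mul_comm, mul_assoc,
        Finset.card_univ, s, hnne]
      field_simp
      ring
    have h2 : (fun _ => s / n : Fin n → FF2) ∈
        Submodule.span FF2 {(fun _ => (1 : FF2) : Fin n → FF2)} := by
      rw [Submodule.mem_span_singleton]
      exact ⟨s / n, by funext i; simp⟩
    have : v = (fun i => v i - s / n) + (fun _ => s / n) := by
      funext i; simp
    rw [this]
    exact Submodule.add_mem _ (Submodule.mem_sup_left h1) (Submodule.mem_sup_right h2)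

/-- The key determinant factorization. -/
lemma det_factor {n : ℕ} (hn : 1 ≤ n) (σ : Equiv.Perm (Fin n)) (c : FF2)
    (h : ∀ v ∈ zeroSumHyperplane FF2 n, permEndo FF2 σ v ∈ zeroSumHyperplane FF2 n) :
    LinearMap.det (LinearMap.id + c • permEndo FF2 σ)
      = (1 + c) * LinearMap.det (LinearMap.id + c • (permEndo FF2 σ).restrict h) := by
  classical
  set q : Submodule FF2 (Fin n → FF2) :=
    Submodule.span FF2 {(fun _ => (1 : FF2) : Fin n → FF2)} with hq_def
  set f : (Fin n → FF2) →ₗ[FF2] (Fin n → FF2) := LinearMap.id + c • permEndo FF2 σ with hf_def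
  have hp : ∀ v ∈ zeroSumHyperplane FF2 n, f v ∈ zeroSumHyperplane FF2 n := by
    intro v hv
    simp only [hf_def, LinearMap.add_apply, LinearMap.id_apply, LinearMap.smul_apply]
    exact Submodule.add_mem _ hv (Submodule.smul_mem _ _ (h v hv))
  have hq : ∀ v ∈ q, f v ∈ q := by
    intro v hv
    simp only [hf_def, LinearMap.add_apply, LinearMap.id_apply, LinearMap.smul_apply]
    exact Submodule.add_mem _ hv (Submodule.smul_mem _ _ (by
      rw [perm_fix_const σ v hv]; exact hv))
  rw [my_det_restrict_mul (compl_span_one hn) f hp hq]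
  have e1 : f.restrict hp = LinearMap.id + c • (permEndo FF2 σ).restrict h := by
    apply LinearMap.ext
    intro v
    apply Subtype.ext
    simp only [LinearMap.restrict_coe_apply, hf_def, LinearMap.add_apply, LinearMap.id_apply,
      LinearMap.smul_apply, Submodule.coe_add, SetLike.val_smul]
  have e2 : f.restrict hq = (1 + c) • (LinearMap.id : q →ₗ[FF2] q) := by
    apply LinearMap.ext
    intro v
    apply Subtype.ext
    simp only [LinearMap.restrict_coe_apply, hf_def, LinearMap.add_apply,
      LinearMap.id_apply, LinearMap.smul_apply, LinearMap.smul_apply,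
      SetLike.val_smul]
    rw [perm_fix_const σ v.1 v.2, add_smul, one_smul]
  have hone : (fun _ => (1 : FF2) : Fin n → FF2) ≠ 0 := by
    intro hc
    have := congrFun hc ⟨0, by omega⟩
    simpa using this
  have hrank : Module.finrank FF2 q = 1 := finrank_span_singleton hone
  rw [e1, e2, LinearMap.det_smul, hrank, LinearMap.det_id]
  ring

lemma ww_ne_one : ww ≠ 1 := by
  intro hc
  have hinj := IsFractionRing.injective (MvPolynomial (Fin 2) ℚ) FF2
  have : (MvPolynomial.X 1 : MvPolynomial (Fin 2) ℚ) = 1 := by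
    apply hinj
    rw [map_one]
    exact hc
  have h0 := congrArg MvPolynomial.constantCoeff this
  simp at h0

/-- For `r ≥ 1`, `n ≥ 1`, with `f_σ` the coordinate-permutation endomorphism
of `F^n` and `g_σ` its restriction to the invariant hyperplane `V₀`:
`(∏_{i=1}^n (1 − w^i)) (1/n!) Σ_σ det(id + x f_σ)^r / det(id − w f_σ)
  = (1+x)^r (∏_{i=2}^n (1 − w^i)) (1/n!) Σ_σ det(id + x g_σ)^r / det(id − w g_σ)`. -/
theorem GL_formula_eq_one_add_x_pow_r_mul_SL_formula (r : ℕ) (hr : 1 ≤ r) (n : ℕ) (hn : 1 ≤ n)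
    (h : ∀ σ : Equiv.Perm (Fin n),
      ∀ v ∈ zeroSumHyperplane FF2 n, permEndo FF2 σ v ∈ zeroSumHyperplane FF2 n) :
    (∏ i ∈ Finset.Icc 1 n, (1 - ww ^ i)) * (n.factorial : FF2)⁻¹ *
        ∑ σ : Equiv.Perm (Fin n),
          (LinearMap.det (LinearMap.id + xx • permEndo FF2 σ)) ^ r /
            LinearMap.det (LinearMap.id - ww • permEndo FF2 σ)
      = (1 + xx) ^ r * (∏ i ∈ Finset.Icc 2 n, (1 - ww ^ i)) * (n.factorial : FF2)⁻¹ *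
        ∑ σ : Equiv.Perm (Fin n),
          (LinearMap.det (LinearMap.id + xx • (permEndo FF2 σ).restrict (h σ))) ^ r /
            LinearMap.det (LinearMap.id - ww • (permEndo FF2 σ).restrict (h σ)) := by
  classical
  have hw : (1 : FF2) - ww ≠ 0 := sub_ne_zero.mpr (Ne.symm ww_ne_one)
  -- split the product
  have hicc : Finset.Icc 1 n = insert 1 (Finset.Icc 2 n) := by
    ext a
    simp only [Finset.mem_Icc, Finset.mem_insert]
    omega
  have hprod : (∏ i ∈ Finset.Icc 1 n, (1 - ww ^ i))
      = (1 - ww) * ∏ i ∈ Finset.Icc 2 n, (1 - ww ^ i) := by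
    rw [hicc, Finset.prod_insert (by simp), pow_one]
  -- rewrite each determinant
  have hdetA : ∀ σ : Equiv.Perm (Fin n),
      LinearMap.det (LinearMap.id + xx • permEndo FF2 σ)
        = (1 + xx) * LinearMap.det (LinearMap.id + xx • (permEndo FF2 σ).restrict (h σ)) :=
    fun σ => det_factor hn σ xx (h σ)
  have hdetB : ∀ σ : Equiv.Perm (Fin n),
      LinearMap.det (LinearMap.id - ww • permEndo FF2 σ)
        = (1 - ww) * LinearMap.det (LinearMap.id - ww • (permEndo FF2 σ).restrict (h σ)) := by
    intro σ
    have := det_factor hn σ (-ww) (h σ)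
    have egl : LinearMap.id - ww • permEndo FF2 σ
        = LinearMap.id + (-ww) • permEndo FF2 σ := by
      apply LinearMap.ext; intro v
      simp [sub_eq_add_neg]
    have egr : LinearMap.id - ww • (permEndo FF2 σ).restrict (h σ)
        = LinearMap.id + (-ww) • (permEndo FF2 σ).restrict (h σ) := by
      apply LinearMap.ext; intro v
      apply Subtype.ext
      simp [sub_eq_add_neg]
    rw [egl, egr, this]; ring
  rw [hprod]
  have hsum : (1 - ww) * ∑ σ : Equiv.Perm (Fin n),
        (LinearMap.det (LinearMap.id + xx • permEndo FF2 σ)) ^ r /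
          LinearMap.det (LinearMap.id - ww • permEndo FF2 σ)
      = (1 + xx) ^ r * ∑ σ : Equiv.Perm (Fin n),
        (LinearMap.det (LinearMap.id + xx • (permEndo FF2 σ).restrict (h σ))) ^ r /
          LinearMap.det (LinearMap.id - ww • (permEndo FF2 σ).restrict (h σ)) := by
    rw [Finset.mul_sum, Finset.mul_sum]
    apply Finset.sum_congr rfl
    intro σ _
    rw [hdetA σ, hdetB σ, mul_pow, mul_div_assoc', mul_div_mul_left _ _ hw,
      mul_div_assoc]
  calc (1 - ww) * (∏ i ∈ Finset.Icc 2 n, (1 - ww ^ i)) * (n.factorial : FF2)⁻¹ *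
        ∑ σ : Equiv.Perm (Fin n),
          (LinearMap.det (LinearMap.id + xx • permEndo FF2 σ)) ^ r /
            LinearMap.det (LinearMap.id - ww • permEndo FF2 σ)
      = (∏ i ∈ Finset.Icc 2 n, (1 - ww ^ i)) * (n.factorial : FF2)⁻¹ *
        ((1 - ww) * ∑ σ : Equiv.Perm (Fin n),
          (LinearMap.det (LinearMap.id + xx • permEndo FF2 σ)) ^ r /
            LinearMap.det (LinearMap.id - ww • permEndo FF2 σ)) := by ring
    _ = (∏ i ∈ Finset.Icc 2 n, (1 - ww ^ i)) * (n.factorial : FF2)⁻¹ *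
        ((1 + xx) ^ r * ∑ σ : Equiv.Perm (Fin n),
          (LinearMap.det (LinearMap.id + xx • (permEndo FF2 σ).restrict (h σ))) ^ r /
            LinearMap.det (LinearMap.id - ww • (permEndo FF2 σ).restrict (h σ))) := by
        rw [hsum]
    _ = _ := by ring
end

section
/- Let K be a field, V a finite-dimensional K-vector space of dimension d, and f : V → V a K-linear endomorphism. For 0 ≤ j ≤ d let ⋀^j f denote the induced endomorphism of the j-th exterior power ⋀^j V. Then in K[X]: Σ_{j=0}^{d} trace(⋀^j f)·X^j = reverse(charpoly(−f)), where charpoly(−f) = det(X·id + f) is the (monic, degree d) characteristic polynomial of −f and reverse denotes polynomial reversal p(X) ↦ X^d·p(1/X). Equivalently, the polynomial Σ_{j=0}^{d} trace(⋀^j f)·X^j equals det(id + X·f) after extending scalars to K[X]. -/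
open Polynomial

namespace ExtTraceAux

open ExteriorAlgebra Finset Matrix

variable {K V : Type*} [Field K] [AddCommGroup V] [Module K V]
variable {d : ℕ} (b : Module.Basis (Fin d) K V)

/-- Monotone enumeration of a finset of given cardinality. -/
noncomputable def enum {j : ℕ} (S : Finset (Fin d)) (hS : S.card = j) : Fin j → Fin d :=
  fun k => ((S.orderIsoOfFin hS) k : Fin d)

lemma enum_mem {j : ℕ} (S : Finset (Fin d)) (hS : S.card = j) (k : Fin j) :
    enum S hS k ∈ S := (S.orderIsoOfFin hS k).2

lemma enum_inj {j : ℕ} (S : Finset (Fin d)) (hS : S.card = j) :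
    Function.Injective (enum S hS) :=
  fun k l h => (S.orderIsoOfFin hS).injective (Subtype.ext h)

/-- The wedge of the basis vectors indexed by `S`, in increasing order. -/
noncomputable def wedge {j : ℕ} (S : Finset (Fin d)) (hS : S.card = j) :
    ExteriorAlgebra K V :=
  ιMulti K j fun k => b (enum S hS k)

/-- The alternating form on `V` given by the minor of coordinates indexed by `S`. -/
noncomputable def coordForm {j : ℕ} (S : Finset (Fin d)) (hS : S.card = j) :
    V [⋀^Fin j]→ₗ[K] K :=
  (Matrix.detRowAlternating).compLinearMap
    ((LinearMap.funLeft K K (enum S hS)).comp (b.equivFun : V →ₗ[K] (Fin d → K)))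

lemma coordForm_apply {j : ℕ} (S : Finset (Fin d)) (hS : S.card = j) (v : Fin j → V) :
    coordForm b S hS v = (Matrix.of fun k l => b.repr (v k) (enum S hS l)).det := by
  rfl

/-- The dual functional on the exterior algebra attached to `S`. -/
noncomputable def dualF {j : ℕ} (S : Finset (Fin d)) (hS : S.card = j) :
    ExteriorAlgebra K V →ₗ[K] K :=
  liftAlternating (Function.update (fun i => (0 : V [⋀^Fin i]→ₗ[K] K)) j (coordForm b S hS))

lemma dualF_ιMulti {j : ℕ} (S : Finset (Fin d)) (hS : S.card = j) (v : Fin j → V) :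
    dualF b S hS (ιMulti K j v) = coordForm b S hS v := by
  rw [dualF, liftAlternating_apply_ιMulti, Function.update_self]

lemma dualF_wedge {j : ℕ} (S T : Finset (Fin d)) (hS : S.card = j) (hT : T.card = j) :
    dualF b T hT (wedge b S hS) = if S = T then 1 else 0 := by
  rw [wedge, dualF_ιMulti, coordForm_apply]
  have hmat : ∀ k l, (b.repr (b (enum S hS k)) (enum T hT l) : K)
      = if enum S hS k = enum T hT l then 1 else 0 := fun k l => by
    rw [Module.Basis.repr_self]; exact Finsupp.single_apply
  split_ifs with hST
  · subst hST
    have h1 : (Matrix.of fun k l => (b.repr (b (enum S hS k)) (enum S hT l) : K)) = 1 := by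
      ext k l
      rw [Matrix.of_apply, hmat, Matrix.one_apply]
      have : enum S hS k = enum S hT l ↔ k = l := by
        constructor
        · intro h; exact enum_inj S hS h
        · intro h; rw [h]
      simp [this]
    rw [h1, Matrix.det_one]
  · obtain ⟨x, hxT, hxS⟩ : ∃ x ∈ T, x ∉ S := by
      by_contra hcon
      push_neg at hcon
      exact hST (Finset.eq_of_subset_of_card_le hcon (by rw [hS, hT])).symm
    obtain ⟨l, hl⟩ : ∃ l, enum T hT l = x :=
      ⟨(T.orderIsoOfFin hT).symm ⟨x, hxT⟩, by simp [enum]⟩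
    apply Matrix.det_eq_zero_of_column_eq_zero l
    intro k
    rw [Matrix.of_apply, hmat, if_neg]
    intro hcontra
    exact hxS (hl ▸ hcontra ▸ enum_mem S hS k)

lemma mem_span_wedge {j : ℕ} (x : ExteriorAlgebra K V) (hx : x ∈ ⋀[K]^j V) :
    x ∈ Submodule.span K
      (Set.range fun S : {S : Finset (Fin d) // S.card = j} => wedge b S.1 S.2) := by
  classical
  rw [← ιMulti_span_fixedDegree] at hx
  refine Submodule.span_le.2 ?_ hx
  rintro _ ⟨v, rfl⟩
  have expand : ιMulti K j v =
      ∑ r ∈ Fintype.piFinset (fun _ : Fin j => (univ : Finset (Fin d))),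
        (∏ k, (b.repr (v k) (r k) : K)) • ιMulti K j (fun k => b (r k)) := by
    have hv : v = fun k => ∑ i : Fin d, b.repr (v k) i • b i :=
      funext fun k => (b.sum_repr (v k)).symm
    conv_lhs => rw [hv]
    have h1 := MultilinearMap.map_sum_finset (ιMulti K j (M := V)).toMultilinearMap
      (fun k i => (b.repr (v k) i : K) • b i) (fun _ : Fin j => (univ : Finset (Fin d)))
    simp only [AlternatingMap.coe_multilinearMap] at h1
    rw [h1]
    refine Finset.sum_congr rfl fun r _ => ?_
    have h2 := MultilinearMap.map_smul_univ (ιMulti K j (M := V)).toMultilinearMap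
      (fun k => (b.repr (v k) (r k) : K)) (fun k => b (r k))
    simpa only [AlternatingMap.coe_multilinearMap] using h2
  rw [expand]
  refine Submodule.sum_mem _ fun r _ => Submodule.smul_mem _ _ ?_
  by_cases hr : Function.Injective r
  · set S : Finset (Fin d) := Finset.image r univ with hSdef
    have hS : S.card = j := by
      rw [hSdef, Finset.card_image_of_injective _ hr, Finset.card_univ, Fintype.card_fin]
    have hmem : ∀ k, r k ∈ S := fun k => Finset.mem_image_of_mem r (mem_univ k)
    have hcard : Fintype.card (Fin j) = Fintype.card {x // x ∈ S} := by
      rw [Fintype.card_coe, hS, Fintype.card_fin]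
    have hinj' : Function.Injective (fun k : Fin j => (⟨r k, hmem k⟩ : {x // x ∈ S})) :=
      fun k l h => hr (congrArg Subtype.val h)
    let e1 : Fin j ≃ {x // x ∈ S} :=
      Equiv.ofBijective _ ((Fintype.bijective_iff_injective_and_card _).2 ⟨hinj', hcard⟩)
    let σ : Equiv.Perm (Fin j) := e1.trans (S.orderIsoOfFin hS).toEquiv.symm
    have hσ : ∀ k, enum S hS (σ k) = r k := by
      intro k
      simp only [enum, σ, Equiv.trans_apply]
      rw [show ((S.orderIsoOfFin hS) ((S.orderIsoOfFin hS).toEquiv.symm (e1 k)))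
          = e1 k from (S.orderIsoOfFin hS).apply_symm_apply (e1 k)]
      rfl
    have hfun : (fun k => b (r k)) = (fun k => b (enum S hS k)) ∘ σ := by
      funext k; simp [Function.comp, hσ]
    rw [hfun, AlternatingMap.map_perm]
    have hw : ιMulti K j (fun k => b (enum S hS k)) ∈ Submodule.span K
        (Set.range fun S : {S : Finset (Fin d) // S.card = j} => wedge b S.1 S.2) :=
      Submodule.subset_span ⟨⟨S, hS⟩, rfl⟩
    rcases Int.units_eq_one_or (Equiv.Perm.sign σ) with h | h <;> rw [h]
    · simpa using hw
    · simpa [Units.smul_def] using Submodule.neg_mem _ hw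
  · obtain ⟨k, l, hkl, hne⟩ : ∃ k l, r k = r l ∧ k ≠ l := by
      simp only [Function.Injective, not_forall] at hr
      obtain ⟨k, l, h1, h2⟩ := hr
      exact ⟨k, l, h1, h2⟩
    have : ιMulti K j (fun k => b (r k)) = 0 :=
      AlternatingMap.map_eq_zero_of_eq _ _ (by rw [hkl]) hne
    rw [this]
    exact Submodule.zero_mem _

lemma wedge_mem {j : ℕ} (S : Finset (Fin d)) (hS : S.card = j) :
    wedge b S hS ∈ ⋀[K]^j V :=
  ιMulti_range K j (Set.mem_range_self _)

lemma wedge_linearIndependent (j : ℕ) :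
    LinearIndependent K (fun S : {S : Finset (Fin d) // S.card = j} =>
      (⟨wedge b S.1 S.2, wedge_mem b S.1 S.2⟩ : ⋀[K]^j V)) := by
  classical
  have hambient : LinearIndependent K
      (fun S : {S : Finset (Fin d) // S.card = j} => wedge b S.1 S.2) := by
    rw [Fintype.linearIndependent_iff]
    intro c hc T
    have h1 := congrArg (dualF b T.1 T.2) hc
    rw [_root_.map_sum, map_zero] at h1
    have h2 : ∀ S : {S : Finset (Fin d) // S.card = j},
        dualF b T.1 T.2 (c S • wedge b S.1 S.2) = if S = T then c S else 0 := by
      intro S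
      rw [_root_.map_smul, dualF_wedge, smul_eq_mul, mul_ite, mul_one, mul_zero]
      congr 1
      simp [Subtype.ext_iff]
    rw [Finset.sum_congr rfl fun S _ => h2 S, Finset.sum_ite_eq' univ T] at h1
    simpa using h1
  exact hambient.of_comp (⋀[K]^j V).subtype

lemma wedge_span_top (j : ℕ) :
    ⊤ ≤ Submodule.span K (Set.range fun S : {S : Finset (Fin d) // S.card = j} =>
      (⟨wedge b S.1 S.2, wedge_mem b S.1 S.2⟩ : ⋀[K]^j V)) := by
  rintro ⟨x, hx⟩ -
  have hx' := mem_span_wedge b x hx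
  have hmap : Submodule.map (⋀[K]^j V).subtype
      (Submodule.span K (Set.range fun S : {S : Finset (Fin d) // S.card = j} =>
        (⟨wedge b S.1 S.2, wedge_mem b S.1 S.2⟩ : ⋀[K]^j V)))
      = Submodule.span K
        (Set.range fun S : {S : Finset (Fin d) // S.card = j} => wedge b S.1 S.2) := by
    rw [Submodule.map_span, ← Set.range_comp]
    rfl
  rw [← hmap] at hx'
  obtain ⟨y, hy, hyx⟩ := hx'
  have : y = ⟨x, hx⟩ := Subtype.ext hyx
  rwa [this] at hy

/-- The wedges of basis vectors form a basis of the `j`-th exterior power. -/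
noncomputable def wedgeBasis (j : ℕ) :
    Module.Basis {S : Finset (Fin d) // S.card = j} K (⋀[K]^j V) :=
  Module.Basis.mk (wedge_linearIndependent b j) (wedge_span_top b j)

lemma wedgeBasis_apply (j : ℕ) (S : {S : Finset (Fin d) // S.card = j}) :
    ((wedgeBasis b j S : ⋀[K]^j V) : ExteriorAlgebra K V) = wedge b S.1 S.2 := by
  rw [wedgeBasis, Module.Basis.mk_apply]

lemma wedgeBasis_repr_apply (j : ℕ) (x : ⋀[K]^j V) (T : {S : Finset (Fin d) // S.card = j}) :
    (wedgeBasis b j).repr x T = dualF b T.1 T.2 (x : ExteriorAlgebra K V) := by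
  classical
  have hx : (x : ExteriorAlgebra K V)
      = ∑ S : {S : Finset (Fin d) // S.card = j},
          (wedgeBasis b j).repr x S • wedge b S.1 S.2 := by
    have h0 := congrArg (⋀[K]^j V).subtype ((wedgeBasis b j).sum_repr x)
    rw [_root_.map_sum] at h0
    simp only [_root_.map_smul, Submodule.coe_subtype, wedgeBasis_apply] at h0
    exact h0.symm
  rw [hx, _root_.map_sum]
  have h2 : ∀ S : {S : Finset (Fin d) // S.card = j},
      dualF b T.1 T.2 ((wedgeBasis b j).repr x S • wedge b S.1 S.2)
        = if S = T then (wedgeBasis b j).repr x S else 0 := by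
    intro S
    rw [_root_.map_smul, dualF_wedge, smul_eq_mul, mul_ite, mul_one, mul_zero]
    congr 1
    simp [Subtype.ext_iff]
  rw [Finset.sum_congr rfl fun S _ => h2 S, Finset.sum_ite_eq' univ T]
  simp

lemma trace_exterior (f : V →ₗ[K] V) (j : ℕ)
    (hj : ∀ x ∈ ⋀[K]^j V, ExteriorAlgebra.map f x ∈ ⋀[K]^j V) :
    LinearMap.trace K (⋀[K]^j V) ((ExteriorAlgebra.map f).toLinearMap.restrict hj) =
      ∑ S : {S : Finset (Fin d) // S.card = j},
        ((LinearMap.toMatrix b b f).submatrix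
          (fun x : {y : Fin d // y ∈ S.1} => (x : Fin d))
          (fun x : {y : Fin d // y ∈ S.1} => (x : Fin d))).det := by
  classical
  rw [LinearMap.trace_eq_matrix_trace K (wedgeBasis b j), Matrix.trace]
  refine Finset.sum_congr rfl fun S _ => ?_
  rw [Matrix.diag_apply, LinearMap.toMatrix_apply, wedgeBasis_repr_apply]
  have hval : (((ExteriorAlgebra.map f).toLinearMap.restrict hj
        (wedgeBasis b j S) : ⋀[K]^j V) : ExteriorAlgebra K V)
      = ιMulti K j (f ∘ fun k => b (enum S.1 S.2 k)) := by
    show ExteriorAlgebra.map f ((wedgeBasis b j S : ⋀[K]^j V) : ExteriorAlgebra K V) = _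
    rw [wedgeBasis_apply, wedge, map_apply_ιMulti]
  rw [hval, dualF_ιMulti, coordForm_apply]
  have hmat : (Matrix.of fun k l =>
        (b.repr ((f ∘ fun k => b (enum S.1 S.2 k)) k) (enum S.1 S.2 l) : K))
      = ((LinearMap.toMatrix b b f).submatrix (enum S.1 S.2) (enum S.1 S.2))ᵀ := by
    ext k l
    rw [Matrix.transpose_apply, Matrix.submatrix_apply, LinearMap.toMatrix_apply]
    rfl
  rw [hmat, Matrix.det_transpose]
  rw [← Matrix.det_submatrix_equiv_self (S.1.orderIsoOfFin S.2).toEquiv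
    ((LinearMap.toMatrix b b f).submatrix
      (fun x : {y : Fin d // y ∈ S.1} => (x : Fin d))
      (fun x : {y : Fin d // y ∈ S.1} => (x : Fin d))),
    Matrix.submatrix_submatrix]
  rfl

lemma det_one_add {n R : Type*} [Fintype n] [DecidableEq n] [CommRing R] (A : Matrix n n R) :
    (1 + A).det = ∑ S : Finset n,
      (A.submatrix (fun x : {y : n // y ∈ S} => (x : n))
        (fun x : {y : n // y ∈ S} => (x : n))).det := by
  classical
  have h1 := MultilinearMap.map_add_univ
    (Matrix.detRowAlternating (n := n) (R := R)).toMultilinearMap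
    (fun i => A i) (fun i => (1 : Matrix n n R) i)
  simp only [AlternatingMap.coe_multilinearMap] at h1
  have h0 : Matrix.detRowAlternating ((fun i => A i) + (fun i => (1 : Matrix n n R) i))
      = (1 + A).det := by
    rw [show ((fun i => A i) + fun i => (1 : Matrix n n R) i)
        = ((A + 1 : Matrix n n R) : n → n → R) from rfl]
    rw [add_comm A 1]
    rfl
  rw [← h0, h1]
  refine Finset.sum_congr rfl fun S _ => ?_
  have hdet : Matrix.detRowAlternating
        (S.piecewise (fun i => A i) (fun i => (1 : Matrix n n R) i))
      = (Matrix.of (S.piecewise (fun i => A i) (fun i => (1 : Matrix n n R) i))).det := rfl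
  rw [hdet, ← Matrix.det_submatrix_equiv_self (Equiv.sumCompl (· ∈ S))]
  have hB : (Matrix.of (S.piecewise (fun i => A i) (fun i => (1 : Matrix n n R) i))).submatrix
        (Equiv.sumCompl (· ∈ S)) (Equiv.sumCompl (· ∈ S))
      = Matrix.fromBlocks
          (A.submatrix (fun x : {y : n // y ∈ S} => (x : n))
            (fun x : {y : n // y ∈ S} => (x : n)))
          (A.submatrix (fun x : {y : n // y ∈ S} => (x : n))
            (fun x : {y : n // ¬ y ∈ S} => (x : n)))
          0 1 := by
    ext i j
    rcases i with i | i <;> rcases j with j | j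
    · simp [Finset.piecewise_eq_of_mem _ _ _ i.2]
    · simp [Finset.piecewise_eq_of_mem _ _ _ i.2]
    · have hne : (i : n) ≠ (j : n) := fun hij => i.2 (hij ▸ j.2)
      simp [Finset.piecewise_eq_of_notMem _ _ _ i.2, Matrix.one_apply, hne]
    · simp [Finset.piecewise_eq_of_notMem _ _ _ i.2, Matrix.one_apply, Subtype.ext_iff]
  rw [hB, Matrix.det_fromBlocks_zero₂₁, Matrix.det_one, mul_one]

end ExtTraceAux

open ExtTraceAux in
/-- For a `d`-dimensional vector space `V` over a field `K` and a linear
endomorphism `f : V → V`, the induced endomorphism `⋀^j f` of the `j`-th exterior power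
(given by restricting the algebra map `ExteriorAlgebra.map f` to the grade-`j` component
`⋀[K]^j V`, which it preserves) satisfies
`Σ_{j=0}^d trace(⋀^j f)·X^j = reverse (charpoly (−f))` in `K[X]`,
where `charpoly(−f) = det(X·id + f)` and `reverse` is polynomial reversal
`p(X) ↦ X^d p(1/X)`. -/
theorem sum_trace_exteriorPower_eq_reverse_charpoly_neg
    (K V : Type*) [Field K] [AddCommGroup V] [Module K V] [FiniteDimensional K V]
    (d : ℕ) (hd : Module.finrank K V = d) (f : V →ₗ[K] V) :
    (∀ j : ℕ, ∀ x ∈ ⋀[K]^j V, ExteriorAlgebra.map f x ∈ ⋀[K]^j V) ∧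
      ∀ h : ∀ j : ℕ, ∀ x ∈ ⋀[K]^j V, ExteriorAlgebra.map f x ∈ ⋀[K]^j V,
        ∑ j ∈ Finset.range (d + 1),
            Polynomial.C
              (LinearMap.trace K (⋀[K]^j V)
                ((ExteriorAlgebra.map f).toLinearMap.restrict (h j))) *
              Polynomial.X ^ j
          = (LinearMap.charpoly (-f)).reverse := by
  classical
  have hbase : Submodule.map (ExteriorAlgebra.map f).toLinearMap
      (LinearMap.range (ExteriorAlgebra.ι K (M := V)))
      ≤ LinearMap.range (ExteriorAlgebra.ι K (M := V)) := by
    rw [ExteriorAlgebra.ι_range_map_map]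
    exact LinearMap.map_le_range
  have hpow : ∀ k : ℕ,
      (Submodule.map (ExteriorAlgebra.map f).toLinearMap
        (LinearMap.range (ExteriorAlgebra.ι K (M := V)))) ^ k
      ≤ (LinearMap.range (ExteriorAlgebra.ι K (M := V))) ^ k := by
    intro k
    induction k with
    | zero => rw [pow_zero, pow_zero]
    | succ k ih => rw [pow_succ, pow_succ]; exact mul_le_mul' ih hbase
  have hpres : ∀ j : ℕ, ∀ x ∈ ⋀[K]^j V, ExteriorAlgebra.map f x ∈ ⋀[K]^j V := by
    intro j x hx
    have h1 : ExteriorAlgebra.map f x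
        ∈ Submodule.map (ExteriorAlgebra.map f).toLinearMap (⋀[K]^j V) :=
      Submodule.mem_map_of_mem hx
    rw [show (⋀[K]^j V : Submodule K (ExteriorAlgebra K V))
        = (LinearMap.range (ExteriorAlgebra.ι K (M := V))) ^ j from rfl,
      Submodule.map_pow] at h1
    exact hpow j h1
  refine ⟨hpres, fun h => ?_⟩
  have b : Module.Basis (Fin d) K V := Module.finBasisOfFinrankEq K V hd
  set M := LinearMap.toMatrix b b f with hM
  have hrev : (LinearMap.charpoly (-f)).reverse
      = (1 + (X : K[X]) • M.map C).det := by
    rw [← LinearMap.charpoly_toMatrix (-f) b, Matrix.reverse_charpoly, Matrix.charpolyRev]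
    congr 1
    rw [_root_.map_neg (LinearMap.toMatrix b b) f, ← hM]
    ext i j
    simp [Matrix.sub_apply, Matrix.add_apply, Matrix.smul_apply, Matrix.map_apply,
      sub_eq_add_neg, mul_neg]
  rw [hrev, det_one_add, ← Finset.powerset_univ, Finset.sum_powerset,
    Finset.card_univ, Fintype.card_fin]
  refine Finset.sum_congr rfl fun j hj => ?_
  have hS : ∀ S ∈ Finset.powersetCard j (Finset.univ : Finset (Fin d)),
      (((X : K[X]) • M.map C).submatrix (fun x : {y : Fin d // y ∈ S} => (x : Fin d))
        (fun x : {y : Fin d // y ∈ S} => (x : Fin d))).det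
      = C ((M.submatrix (fun x : {y : Fin d // y ∈ S} => (x : Fin d))
          (fun x : {y : Fin d // y ∈ S} => (x : Fin d))).det) * X ^ j := by
    intro S hSmem
    rw [Finset.mem_powersetCard_univ] at hSmem
    have h1 : ((X : K[X]) • M.map C).submatrix
          (fun x : {y : Fin d // y ∈ S} => (x : Fin d))
          (fun x : {y : Fin d // y ∈ S} => (x : Fin d))
        = (X : K[X]) • ((M.map C).submatrix
          (fun x : {y : Fin d // y ∈ S} => (x : Fin d))
          (fun x : {y : Fin d // y ∈ S} => (x : Fin d))) := rfl
    rw [h1, Matrix.det_smul, Matrix.submatrix_map, ← RingHom.mapMatrix_apply,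
      ← RingHom.map_det, Fintype.card_coe, hSmem, mul_comm]
  rw [Finset.sum_congr rfl hS, ← Finset.sum_mul]
  congr 1
  rw [trace_exterior b f j (h j)]
  rw [map_sum C (fun S : {S : Finset (Fin d) // S.card = j} =>
    (M.submatrix (fun x : {y : Fin d // y ∈ S.1} => (x : Fin d))
      (fun x : {y : Fin d // y ∈ S.1} => (x : Fin d))).det) Finset.univ]
  exact (Finset.sum_subtype (Finset.powersetCard j (Finset.univ : Finset (Fin d)))
    (fun S => Finset.mem_powersetCard_univ)
    (fun S => C ((M.submatrix (fun x : {y : Fin d // y ∈ S} => (x : Fin d))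
      (fun x : {y : Fin d // y ∈ S} => (x : Fin d))).det))).symm
end
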